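/- arXiv:2403.00619 — 8 statements merged into one kernel-verified Lean document; each statement's English description precedes it below -/
import Mathlib

section
/- (Maharam's recurrence theorem) Let T be a measure preserving transformation of a measure space (X, F, m). If there is a measurable set A of finite measure with X = ∪_{k≥1} T^{-k} A up to an m-null set, then T is conservative: every measurable subset B of X is recurrent, i.e. τ_B < ∞ m-a.e. on B. -/
open MeasureTheory Set
open scoped ENNReal

/-- Maharam's recurrence theorem: if a set `A` of finite measure
satisfies `X = ⋃_{k≥1} T⁻ᵏ A` up to an `m`-null set, then `T` is conservative:
every measurable set `B` is recurrent, i.e. a.e. point of `B` returns to `B`. -/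
theorem stmt4 {X : Type*} [MeasurableSpace X] (m : Measure X) (T : X → X)
    (hT : MeasurePreserving T m m) (A : Set X) (hA : MeasurableSet A) (hfin : m A ≠ ⊤)
    (hcov : ∀ᵐ x ∂m, ∃ k, 1 ≤ k ∧ T^[k] x ∈ A) :
    ∀ B : Set X, MeasurableSet B → ∀ᵐ x ∂m.restrict B, ∃ n, 1 ≤ n ∧ T^[n] x ∈ B := by
  intro B hB
  -- the set of points of `B` that never return to `B`
  set W : Set X := B ∩ ⋂ n : ℕ, (T^[n + 1]) ⁻¹' Bᶜ with hWdef
  have hTiter : ∀ n : ℕ, MeasurePreserving (T^[n]) m m := fun n => hT.iterate n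
  have hWmeas : MeasurableSet W :=
    hB.inter (MeasurableSet.iInter fun n => ((hTiter (n + 1)).measurable hB.compl))
  have hWmem : ∀ x, x ∈ W ↔ x ∈ B ∧ ∀ n : ℕ, T^[n + 1] x ∉ B := by
    intro x
    simp [hWdef, mem_iInter]
  -- key: W is null
  have hW0 : m W = 0 := by
    by_contra hne
    -- Step A: a.e. x hits A infinitely often
    have h1 : ∀ j : ℕ, ∀ᵐ x ∂m, ∃ k, 1 ≤ k ∧ T^[k + j] x ∈ A := by
      intro j
      have := (hTiter j).quasiMeasurePreserving.ae hcov
      filter_upwards [this] with x hx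
      obtain ⟨k, hk1, hk2⟩ := hx
      exact ⟨k, hk1, by rwa [Function.iterate_add_apply]⟩
    have hinf : ∀ᵐ x ∂m, {k : ℕ | T^[k + 1] x ∈ A}.Infinite := by
      have h2 : ∀ᵐ x ∂m, ∀ j : ℕ, ∃ k, 1 ≤ k ∧ T^[k + j] x ∈ A := ae_all_iff.2 h1
      filter_upwards [h2] with x hx
      apply Set.infinite_of_not_bddAbove
      rintro ⟨b, hb⟩
      obtain ⟨k, hk1, hk2⟩ := hx (b + 1)
      have hmem : (k + b) ∈ {k : ℕ | T^[k + 1] x ∈ A} := by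
        have : k + b + 1 = k + (b + 1) := by omega
        simpa only [mem_setOf_eq, this] using hk2
      have := hb hmem
      omega
    -- the series
    set a : ℕ → ℝ≥0∞ := fun k => m (W ∩ (T^[k + 1]) ⁻¹' A) with ha
    -- Step B: the series sums to ⊤
    have htop : ∑' k, a k = ⊤ := by
      have hmeasC : ∀ k : ℕ, MeasurableSet ((T^[k + 1]) ⁻¹' A) := fun k =>
        (hTiter (k + 1)).measurable hA
      have hrw : ∀ k : ℕ, a k = ∫⁻ x, ((T^[k + 1]) ⁻¹' A).indicator (fun _ => (1 : ℝ≥0∞)) x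
          ∂(m.restrict W) := by
        intro k
        rw [lintegral_indicator_const (hmeasC k), one_mul, Measure.restrict_apply (hmeasC k),
          inter_comm]
      calc ∑' k, a k
          = ∑' k, ∫⁻ x, ((T^[k + 1]) ⁻¹' A).indicator (fun _ => (1 : ℝ≥0∞)) x
              ∂(m.restrict W) := by simp_rw [hrw]
        _ = ∫⁻ x, ∑' k, ((T^[k + 1]) ⁻¹' A).indicator (fun _ => (1 : ℝ≥0∞)) x
              ∂(m.restrict W) := (lintegral_tsum fun k =>
                ((measurable_one.indicator (hmeasC k)).aemeasurable)).symm
        _ = ∫⁻ _, (⊤ : ℝ≥0∞) ∂(m.restrict W) := by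
            refine lintegral_congr_ae (ae_restrict_of_ae ?_)
            filter_upwards [hinf] with x hx
            have : ∑' k, ((T^[k + 1]) ⁻¹' A).indicator (fun _ => (1 : ℝ≥0∞)) x
                = ∑' k, ({k : ℕ | T^[k + 1] x ∈ A}).indicator (fun _ => (1 : ℝ≥0∞)) k :=
              tsum_congr fun k => rfl
            rw [this, ← tsum_subtype]
            haveI : Infinite ↥{k : ℕ | T^[k + 1] x ∈ A} := hx.to_subtype
            exact ENNReal.tsum_const_eq_top_of_ne_zero one_ne_zero
        _ = ⊤ := by
            rw [lintegral_const, Measure.restrict_apply_univ, ENNReal.top_mul hne]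
    -- Step C: the series is bounded by m A
    have hdisj : ∀ i j : ℕ, i < j → Disjoint ((T^[i]) ⁻¹' W) ((T^[j]) ⁻¹' W) := by
      intro i j hij
      rw [Set.disjoint_left]
      intro x hxi hxj
      have h1 := (hWmem _).1 hxi
      have h2 := (hWmem _).1 hxj
      have key : T^[(j - i - 1) + 1] (T^[i] x) = T^[j] x := by
        rw [← Function.iterate_add_apply]
        congr 1; omega
      exact h1.2 (j - i - 1) (key ▸ h2.1)
    have hbdd : ∑' k, a k ≤ m A := by
      rw [ENNReal.tsum_eq_iSup_sum]
      refine iSup_le fun s => ?_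
      set K : ℕ := s.sup id + 1 with hK
      have hkK : ∀ k ∈ s, k + 1 ≤ K := fun k hk => by
        have := Finset.le_sup (f := id) hk; simp only [id] at this; omega
      set E : ℕ → Set X := fun k => (T^[K - (k + 1)]) ⁻¹' W ∩ (T^[K]) ⁻¹' A with hE
      have hEeq : ∀ k ∈ s, a k = m (E k) := by
        intro k hk
        have hcomp : (T^[K - (k + 1)]) ⁻¹' (W ∩ (T^[k + 1]) ⁻¹' A) = E k := by
          rw [Set.preimage_inter, ← Set.preimage_comp, ← Function.iterate_add]
          have : k + 1 + (K - (k + 1)) = K := by have := hkK k hk; omega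
          rw [this]
        rw [ha]
        calc m (W ∩ (T^[k + 1]) ⁻¹' A)
            = m ((T^[K - (k + 1)]) ⁻¹' (W ∩ (T^[k + 1]) ⁻¹' A)) :=
              ((hTiter (K - (k + 1))).measure_preimage
                ((hWmeas.inter ((hTiter (k + 1)).measurable hA)).nullMeasurableSet)).symm
          _ = m (E k) := by rw [hcomp]
      have hEd : (↑s : Set ℕ).PairwiseDisjoint E := by
        intro i hi j hj hij
        have hi' := hkK i hi
        have hj' := hkK j hj
        have hne' : K - (i + 1) ≠ K - (j + 1) := by omega
        rcases hne'.lt_or_gt with h | h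
        · exact (Set.disjoint_left.2 fun x hx hx' =>
            (hdisj _ _ h).le_bot ⟨hx.1, hx'.1⟩)
        · exact (Set.disjoint_left.2 fun x hx hx' =>
            (hdisj _ _ h).le_bot ⟨hx'.1, hx.1⟩)
      have hEm : ∀ k ∈ s, MeasurableSet (E k) := fun k _ =>
        ((hTiter (K - (k + 1))).measurable hWmeas).inter ((hTiter K).measurable hA)
      calc ∑ k ∈ s, a k = ∑ k ∈ s, m (E k) := Finset.sum_congr rfl hEeq
        _ = m (⋃ k ∈ s, E k) := (measure_biUnion_finset hEd hEm).symm
        _ ≤ m ((T^[K]) ⁻¹' A) := measure_mono (Set.iUnion₂_subset fun k _ => inter_subset_right)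
        _ = m A := (hTiter K).measure_preimage hA.nullMeasurableSet
    rw [htop] at hbdd
    exact hfin (top_le_iff.1 hbdd)
  -- conclude
  rw [ae_restrict_iff' hB, ae_iff]
  refine measure_mono_null ?_ hW0
  intro x hx
  simp only [mem_setOf_eq, not_forall, not_exists] at hx
  obtain ⟨hxB, hxn⟩ := hx
  refine (hWmem x).2 ⟨hxB, fun n hn => ?_⟩
  have := hxn (n + 1)
  simp only [not_and] at this
  exact this (by omega) hn
end

section
/- Let T be a measure preserving transformation of a measure space (X, F, m). Then T is conservative and m is σ-finite if and only if there exists a sequence of measurable sets {A_k} each of finite measure and recurrent for T, whose union covers X up to an m-null set. -/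
open MeasureTheory Set

/-- `T` is conservative and `m` is σ-finite iff there is a sequence of
measurable sets of finite measure, each recurrent for `T`, covering `X` up to an
`m`-null set. -/
theorem stmt5 {X : Type*} [MeasurableSpace X] (m : Measure X) (T : X → X)
    (hT : MeasurePreserving T m m) :
    ((∀ B : Set X, MeasurableSet B → ∀ᵐ x ∂m.restrict B, ∃ n, 1 ≤ n ∧ T^[n] x ∈ B) ∧
        SigmaFinite m) ↔
      ∃ A : ℕ → Set X, (∀ k, MeasurableSet (A k)) ∧ (∀ k, m (A k) ≠ ⊤) ∧
        (∀ k, ∀ᵐ x ∂m.restrict (A k), ∃ n, 1 ≤ n ∧ T^[n] x ∈ A k) ∧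
        m (Set.univ \ ⋃ k, A k) = 0 := by
  have hTm : Measurable T := hT.measurable
  constructor
  · rintro ⟨hrec, hsf⟩
    exact ⟨spanningSets m, fun k => measurableSet_spanningSets m k,
      fun k => (measure_spanningSets_lt_top m k).ne,
      fun k => hrec _ (measurableSet_spanningSets m k),
      by rw [iUnion_spanningSets]; simp⟩
  · rintro ⟨A, hAm, hAfin, hArec, hAcov⟩
    -- σ-finiteness
    have hsf : SigmaFinite m := by
      refine ⟨⟨⟨fun n => (univ \ ⋃ k, A k) ∪ ⋃ i ∈ Finset.range (n + 1), A i,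
        fun _ => trivial, fun n => ?_, ?_⟩⟩⟩
      · calc m ((univ \ ⋃ k, A k) ∪ ⋃ i ∈ Finset.range (n + 1), A i)
            ≤ m (univ \ ⋃ k, A k) + m (⋃ i ∈ Finset.range (n + 1), A i) :=
              measure_union_le _ _
          _ ≤ 0 + ∑ i ∈ Finset.range (n + 1), m (A i) := by
              rw [hAcov]; exact add_le_add le_rfl (measure_biUnion_finset_le _ _)
          _ < ⊤ := by
              rw [zero_add]; exact ENNReal.sum_lt_top.mpr fun i _ => (hAfin i).lt_top
      · apply Set.eq_univ_of_forall
        intro x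
        by_cases hx : x ∈ ⋃ k, A k
        · rcases mem_iUnion.mp hx with ⟨k, hk⟩
          exact mem_iUnion.mpr ⟨k, Or.inr (mem_biUnion (Finset.self_mem_range_succ k) hk)⟩
        · exact mem_iUnion.mpr ⟨0, Or.inl ⟨trivial, hx⟩⟩
    refine ⟨?_, hsf⟩
    intro B hB
    -- measurability of "never-return" sets
    have hWm : ∀ C : Set X, MeasurableSet C →
        MeasurableSet (C ∩ ⋂ n, T^[n + 1] ⁻¹' Cᶜ) := fun C hC =>
      hC.inter (MeasurableSet.iInter fun n => (hTm.iterate (n + 1)) hC.compl)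
    set W : Set X := B ∩ ⋂ n, T^[n + 1] ⁻¹' Bᶜ with hWdef
    -- the key claim: the never-returning part of B meets each A k in a null set
    have key : ∀ k, m (W ∩ A k) = 0 := by
      intro k
      set D : Set X := W ∩ A k with hDdef
      have hDm : MeasurableSet D := (hWm B hB).inter (hAm k)
      set s : ℕ → Set X := fun j => D ∩ T^[j] ⁻¹' A k with hsdef
      have hsm : ∀ j, MeasurableSet (s j) := fun j => hDm.inter ((hTm.iterate j) (hAm k))
      -- D is wandering
      have hdisj : ∀ i j : ℕ, i < j → Disjoint (T^[i] ⁻¹' D) (T^[j] ⁻¹' D) := by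
        intro i j hij
        rw [Set.disjoint_left]
        intro x hxi hxj
        have h1 : T^[i] x ∈ D := hxi
        have h2 : T^[j] x ∈ B := (Set.mem_preimage.mp hxj).1.1
        have h4 : T^[j - i - 1 + 1] (T^[i] x) ∉ B := by
          have := Set.mem_iInter.mp h1.1.2 (j - i - 1)
          exact this
        apply h4
        rw [← Function.iterate_add_apply]
        have hji : j - i - 1 + 1 + i = j := by omega
        rw [hji]
        exact h2
      -- partial sums bound
      have hsum : ∀ N : ℕ, ∑ j ∈ Finset.range N, m (s j) ≤ m (A k) := by
        intro N
        rcases Nat.eq_zero_or_pos N with rfl | hN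
        · simp
        obtain ⟨M, rfl⟩ : ∃ M, N = M + 1 := ⟨N - 1, by omega⟩
        set g : ℕ → Set X := fun j => T^[M - j] ⁻¹' (s j) with hgdef
        have hgm : ∀ j, MeasurableSet (g j) := fun j => (hTm.iterate (M - j)) (hsm j)
        have hterm : ∀ j ∈ Finset.range (M + 1), m (s j) = m (g j) := by
          intro j _
          exact ((hT.iterate (M - j)).measure_preimage (hsm j).nullMeasurableSet).symm
        rw [Finset.sum_congr rfl hterm]
        have hgdisj : (↑(Finset.range (M + 1)) : Set ℕ).PairwiseDisjoint g := by
          intro i hi j hj hij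
          have hi' : i ≤ M := by simpa using Finset.mem_range_succ_iff.mp (by simpa using hi)
          have hj' : j ≤ M := by simpa using Finset.mem_range_succ_iff.mp (by simpa using hj)
          have hne : M - i ≠ M - j := by omega
          have hsub1 : g i ⊆ T^[M - i] ⁻¹' D := fun x hx => (Set.mem_preimage.mp hx).1
          have hsub2 : g j ⊆ T^[M - j] ⁻¹' D := fun x hx => (Set.mem_preimage.mp hx).1
          rcases lt_or_gt_of_ne hne with h | h
          · exact ((hdisj _ _ h).mono hsub1 hsub2)
          · exact ((hdisj _ _ h).symm.mono hsub1 hsub2)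
        rw [← measure_biUnion_finset hgdisj fun j _ => hgm j]
        refine le_trans (measure_mono ?_) (le_of_eq ((hT.iterate M).measure_preimage
          (hAm k).nullMeasurableSet))
        intro x hx
        rcases Set.mem_iUnion₂.mp hx with ⟨j, hj, hxj⟩
        have hj' : j ≤ M := Finset.mem_range_succ_iff.mp hj
        have hx1 : T^[M - j] x ∈ s j := hxj
        have hx2 : T^[j] (T^[M - j] x) ∈ A k := hx1.2
        rw [← Function.iterate_add_apply] at hx2
        have : j + (M - j) = M := by omega
        rw [this] at hx2
        exact hx2
      have htsum : ∑' j, m (s j) ≠ ⊤ := by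
        refine ne_top_of_le_ne_top (hAfin k) ?_
        rw [ENNReal.tsum_eq_iSup_nat]
        exact iSup_le hsum
      have hfin : m {x | ¬({i | x ∈ s i}).Finite} = 0 := by
        have := ae_finite_setOf_mem (μ := m) htsum
        rwa [MeasureTheory.ae_iff] at this
      -- never-returning-to-A-k set is null
      set E : Set X := A k ∩ ⋂ n, T^[n + 1] ⁻¹' (A k)ᶜ with hEdef
      have hEm : MeasurableSet E := hWm (A k) (hAm k)
      have hE0 : m E = 0 := by
        have h1 : m.restrict (A k) {x | ¬∃ n, 1 ≤ n ∧ T^[n] x ∈ A k} = 0 :=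
          MeasureTheory.ae_iff.mp (hArec k)
        have h2 : m.restrict (A k) E = 0 := by
          refine measure_mono_null ?_ h1
          intro x hx
          simp only [mem_setOf_eq, not_exists, not_and]
          intro n hn hxn
          obtain ⟨j, rfl⟩ : ∃ j, n = j + 1 := ⟨n - 1, by omega⟩
          exact Set.mem_iInter.mp hx.2 j hxn
        rw [Measure.restrict_apply hEm] at h2
        have : E ∩ A k = E := Set.inter_eq_self_of_subset_left fun x hx => hx.1
        rwa [this] at h2
      have hpre0 : m (⋃ n, T^[n] ⁻¹' E) = 0 :=
        measure_iUnion_null fun n => by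
          rw [(hT.iterate n).measure_preimage hEm.nullMeasurableSet]; exact hE0
      -- D is contained in the two null sets
      have hDsub : D ⊆ {x | ¬({i | x ∈ s i}).Finite} ∪ ⋃ n, T^[n] ⁻¹' E := by
        intro x hxD
        by_cases hfx : ({i | x ∈ s i}).Finite
        · right
          have hSeq : {i | x ∈ s i} = {j | T^[j] x ∈ A k} := by
            ext j; simp only [mem_setOf_eq, hsdef, Set.mem_inter_iff, Set.mem_preimage]
            exact ⟨fun h => h.2, fun h => ⟨hxD, h⟩⟩
          rw [hSeq] at hfx
          obtain ⟨N, hN⟩ := hfx.bddAbove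
          classical
          set p : ℕ → Prop := fun j => T^[j] x ∈ A k with hpdef
          have hp0 : p 0 := by simpa [hpdef] using hxD.2
          set n : ℕ := Nat.findGreatest p N with hndef
          have hpn : p n := Nat.findGreatest_spec (Nat.zero_le N) hp0
          have hmax : ∀ j, n < j → ¬p j := by
            intro j hj hpj
            have hjN : j ≤ N := hN (by exact hpj)
            exact Nat.findGreatest_is_greatest hj hjN hpj
          refine Set.mem_iUnion.mpr ⟨n, ?_⟩
          refine Set.mem_preimage.mpr ⟨hpn, ?_⟩
          refine Set.mem_iInter.mpr fun j => ?_
          simp only [Set.mem_preimage, Set.mem_compl_iff]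
          intro hcon
          rw [← Function.iterate_add_apply] at hcon
          exact hmax (j + 1 + n) (by omega) hcon
        · left; exact hfx
      refine le_antisymm ?_ zero_le
      calc m D ≤ m ({x | ¬({i | x ∈ s i}).Finite} ∪ ⋃ n, T^[n] ⁻¹' E) :=
            measure_mono hDsub
        _ ≤ m {x | ¬({i | x ∈ s i}).Finite} + m (⋃ n, T^[n] ⁻¹' E) := measure_union_le _ _
        _ = 0 := by rw [hfin, hpre0, add_zero]
    -- conclude: m W = 0
    have hW0 : m W = 0 := by
      have h1 : m (W ∩ ⋃ k, A k) = 0 := by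
        rw [Set.inter_iUnion]
        exact measure_iUnion_null key
      have h2 : m (W \ ⋃ k, A k) = 0 :=
        measure_mono_null (Set.diff_subset_diff_left (Set.subset_univ W)) hAcov
      refine le_antisymm ?_ zero_le
      calc m W ≤ m (W ∩ ⋃ k, A k) + m (W \ ⋃ k, A k) := by
            refine le_trans (measure_mono ?_) (measure_union_le _ _)
            intro x hx
            by_cases h : x ∈ ⋃ k, A k
            · exact Or.inl ⟨hx, h⟩
            · exact Or.inr ⟨hx, h⟩
        _ = 0 := by rw [h1, h2, add_zero]
    -- translate to the a.e. statement
    rw [MeasureTheory.ae_iff]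
    have hFeq : {x | ¬∃ n, 1 ≤ n ∧ T^[n] x ∈ B} = ⋂ n, T^[n + 1] ⁻¹' Bᶜ := by
      ext x
      simp only [mem_setOf_eq, Set.mem_iInter, Set.mem_preimage, Set.mem_compl_iff,
        not_exists, not_and]
      constructor
      · intro h n
        exact h (n + 1) (Nat.succ_le_succ (Nat.zero_le n))
      · intro h n hn hB'
        obtain ⟨j, rfl⟩ : ∃ j, n = j + 1 := ⟨n - 1, by omega⟩
        exact h j hB'
    rw [hFeq, Measure.restrict_apply
      (MeasurableSet.iInter fun n => (hTm.iterate (n + 1)) hB.compl)]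
    rw [Set.inter_comm]
    exact hW0
end

section
/- (Kac's formula) Let T be a conservative measure preserving transformation of a σ-finite measure space (X, F, m), and let A ∈ F satisfy X = ∪_{k≥1} T^{-k} A up to an m-null set. Then for every B ∈ F, m(B) = ∫_A ∑_{k=0}^{τ_A(x)−1} 1(T^k x ∈ B) m(dx). -/
open MeasureTheory Set ENNReal Filter Topology

set_option linter.unusedSectionVars false

noncomputable def tauA {X : Type*} (T : X → X) (A : Set X) (x : X) : ℕ :=
  sInf {n : ℕ | 1 ≤ n ∧ T^[n] x ∈ A}

namespace KacAux

variable {X : Type*} [MeasurableSpace X]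

/-- points avoiding `A` at all times `0..n` -/
def G (T : X → X) (A : Set X) (n : ℕ) : Set X := {x | ∀ j ≤ n, T^[j] x ∉ A}

/-- points avoiding `A` at all times `1..k` -/
def F (T : X → X) (A : Set X) (k : ℕ) : Set X := {x | ∀ j, 1 ≤ j → j ≤ k → T^[j] x ∉ A}

lemma mem_G {T : X → X} {A : Set X} {n : ℕ} {x : X} :
    x ∈ G T A n ↔ ∀ j ≤ n, T^[j] x ∉ A := Iff.rfl

lemma mem_F {T : X → X} {A : Set X} {k : ℕ} {x : X} :
    x ∈ F T A k ↔ ∀ j, 1 ≤ j → j ≤ k → T^[j] x ∉ A := Iff.rfl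

lemma F_zero (T : X → X) (A : Set X) : F T A 0 = Set.univ := by
  ext x
  simp only [mem_F, Set.mem_univ, iff_true]
  intro j h1 h2
  omega

lemma measurableSet_G {T : X → X} {A : Set X} (hT : Measurable T) (hA : MeasurableSet A)
    (n : ℕ) : MeasurableSet (G T A n) := by
  have : G T A n = ⋂ j ∈ Set.Iic n, T^[j] ⁻¹' Aᶜ := by
    ext x
    simp [G, Set.mem_iInter]
  rw [this]
  exact MeasurableSet.biInter (Set.Iic n).to_countable
    fun j _ => (hA.compl.preimage (hT.iterate j))

lemma measurableSet_F {T : X → X} {A : Set X} (hT : Measurable T) (hA : MeasurableSet A)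
    (k : ℕ) : MeasurableSet (F T A k) := by
  have : F T A k = ⋂ j ∈ Set.Icc 1 k, T^[j] ⁻¹' Aᶜ := by
    ext x
    simp [F, Set.mem_iInter]
  rw [this]
  exact MeasurableSet.biInter (Set.Icc 1 k).to_countable
    fun j _ => (hA.compl.preimage (hT.iterate j))

lemma compl_inter_F (T : X → X) (A : Set X) (n : ℕ) : Aᶜ ∩ F T A n = G T A n := by
  ext x
  simp only [Set.mem_inter_iff, Set.mem_compl_iff, mem_F, mem_G]
  constructor
  · rintro ⟨h0, h⟩ j hj
    cases j with
    | zero => simpa using h0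
    | succ i => exact h (i + 1) (by omega) hj
  · intro h
    exact ⟨by simpa using h 0 (by omega), fun j h1 h2 => h j h2⟩

lemma F_succ_eq (T : X → X) (A B : Set X) (n : ℕ) :
    F T A (n + 1) ∩ T^[n + 1] ⁻¹' B = T ⁻¹' (Aᶜ ∩ (F T A n ∩ T^[n] ⁻¹' B)) := by
  ext x
  simp only [Set.mem_inter_iff, Set.mem_preimage, Set.mem_compl_iff, mem_F]
  constructor
  · rintro ⟨hF, hBx⟩
    refine ⟨by simpa using hF 1 le_rfl (by omega), fun j h1 h2 hA' => ?_, ?_⟩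
    · rw [← Function.iterate_succ_apply] at hA'
      exact hF (j + 1) (by omega) (by omega) hA'
    · rwa [Function.iterate_succ_apply] at hBx
  · rintro ⟨hTA, hF, hBx⟩
    refine ⟨fun j h1 h2 hA' => ?_, by rwa [Function.iterate_succ_apply]⟩
    cases j with
    | zero => omega
    | succ i =>
      rw [Function.iterate_succ_apply] at hA'
      rcases Nat.eq_zero_or_pos i with hi | hi
      · subst hi
        simp only [Function.iterate_zero, id_eq] at hA'
        exact hTA hA'
      · exact hF i (by omega) (by omega) hA'

lemma F_succ_eq' (T : X → X) (A B : Set X) (n : ℕ) :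
    F T A (n + 1) ∩ T^[n + 1] ⁻¹' B = T ⁻¹' (G T A n ∩ T^[n] ⁻¹' B) := by
  rw [F_succ_eq, ← compl_inter_F T A n, Set.inter_assoc]

lemma pre_succ (T : X → X) (S : Set X) (n : ℕ) :
    T^[n + 1] ⁻¹' S = T ⁻¹' (T^[n] ⁻¹' S) := by
  ext x
  simp only [Set.mem_preimage]
  rw [Function.iterate_succ_apply]

lemma pre_succ' (T : X → X) (S : Set X) (n : ℕ) :
    T^[n + 1] ⁻¹' S = T^[n] ⁻¹' (T ⁻¹' S) := by
  ext x
  simp only [Set.mem_preimage]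
  rw [Function.iterate_succ_apply']

variable {m : Measure X} [SigmaFinite m] {T : X → X} {A : Set X}

lemma conservative (hT : MeasurePreserving T m m)
    (hcons : ∀ B : Set X, MeasurableSet B → ∀ᵐ x ∂m.restrict B, ∃ n, 1 ≤ n ∧ T^[n] x ∈ B) :
    Conservative T m := by
  refine ⟨hT.quasiMeasurePreserving, fun s hs hs0 => ?_⟩
  by_contra h
  push_neg at h
  have h1 : ∀ᵐ x ∂m.restrict s, False := by
    filter_upwards [hcons s hs, ae_restrict_mem hs] with x hx hxs
    obtain ⟨n, hn, hns⟩ := hx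
    exact h x hxs n (by omega) hns
  have h2 : m.restrict s Set.univ = 0 := by
    simpa using ae_iff.mp h1
  rw [Measure.restrict_apply_univ] at h2
  exact hs0 h2

lemma poincare_tsum (hT : MeasurePreserving T m m)
    (hcons : ∀ B : Set X, MeasurableSet B → ∀ᵐ x ∂m.restrict B, ∃ n, 1 ≤ n ∧ T^[n] x ∈ B)
    {S : Set X} (hS : MeasurableSet S) (hS0 : m S ≠ 0) :
    ∑' k : ℕ, m (S ∩ T^[k] ⁻¹' S) = ∞ := by
  have hc := (conservative hT hcons).ae_mem_imp_frequently_image_mem hS.nullMeasurableSet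
  have hmeask : ∀ k : ℕ, MeasurableSet (T^[k] ⁻¹' S) :=
    fun k => hS.preimage (hT.measurable.iterate k)
  have h1 : ∀ k : ℕ, m (S ∩ T^[k] ⁻¹' S)
      = ∫⁻ x in S, (T^[k] ⁻¹' S).indicator (1 : X → ℝ≥0∞) x ∂m := by
    intro k
    have h := lintegral_indicator_one (μ := m.restrict S) (hmeask k)
    rw [Measure.restrict_apply (hmeask k), Set.inter_comm] at h
    exact h.symm
  calc ∑' k : ℕ, m (S ∩ T^[k] ⁻¹' S)
      = ∫⁻ x in S, ∑' k : ℕ, (T^[k] ⁻¹' S).indicator (1 : X → ℝ≥0∞) x ∂m := by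
        rw [lintegral_tsum fun k => (measurable_one.indicator (hmeask k)).aemeasurable]
        exact tsum_congr h1
    _ = ∞ := by
        have h2 : ∀ᵐ x ∂m.restrict S,
            (∑' k : ℕ, (T^[k] ⁻¹' S).indicator (1 : X → ℝ≥0∞) x) = ∞ := by
          filter_upwards [ae_restrict_of_ae hc, ae_restrict_mem hS] with x hx hxs
          have hinf : {k : ℕ | T^[k] x ∈ S}.Infinite := by
            rw [Set.infinite_iff_frequently_cofinite, Nat.cofinite_eq_atTop]
            exact hx hxs
          by_contra hne
          obtain ⟨n, hn⟩ := ENNReal.exists_nat_gt hne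
          obtain ⟨t, ht, hcard⟩ := hinf.exists_subset_card_eq n
          have : (n : ℝ≥0∞) ≤ ∑' k : ℕ, (T^[k] ⁻¹' S).indicator (1 : X → ℝ≥0∞) x := by
            calc (n : ℝ≥0∞) = ∑ k ∈ t, 1 := by
                  rw [Finset.sum_const, hcard, nsmul_eq_mul, mul_one]
              _ = ∑ k ∈ t, (T^[k] ⁻¹' S).indicator (1 : X → ℝ≥0∞) x := by
                  refine Finset.sum_congr rfl fun k hk => ?_
                  exact (Set.indicator_of_mem (show x ∈ T^[k] ⁻¹' S from ht hk) (1 : X → ℝ≥0∞)).symm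
              _ ≤ _ := ENNReal.sum_le_tsum t
          exact absurd (lt_of_lt_of_le hn this) (lt_irrefl _)
        rw [lintegral_congr_ae h2, lintegral_const, Measure.restrict_apply_univ]
        exact ENNReal.top_mul hS0

lemma crux (hT : MeasurePreserving T m m) (hA : MeasurableSet A)
    (hcons : ∀ B : Set X, MeasurableSet B → ∀ᵐ x ∂m.restrict B, ∃ n, 1 ≤ n ∧ T^[n] x ∈ B)
    (hcov : ∀ᵐ x ∂m, ∃ k, 1 ≤ k ∧ T^[k] x ∈ A)
    {W : Set X} (hW : MeasurableSet W) (hWfin : m W ≠ ∞) :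
    Tendsto (fun n => m (G T A n ∩ T^[n] ⁻¹' W)) atTop (𝓝 0) := by
  have hTm : Measurable T := hT.measurable
  have hTk : ∀ k : ℕ, Measurable (T^[k]) := fun k => hTm.iterate k
  have hGmeas : ∀ n, MeasurableSet (G T A n) := measurableSet_G hTm hA
  set ν : ℕ → Measure X := fun N => (m.restrict (G T A N)).map (T^[N]) with hν
  have hν_apply : ∀ N (S : Set X), MeasurableSet S →
      ν N S = m (G T A N ∩ T^[N] ⁻¹' S) := by
    intro N S hS
    rw [hν]
    rw [Measure.map_apply (hTk N) hS, Measure.restrict_apply (hS.preimage (hTk N)),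
      Set.inter_comm]
  have hGsub : ∀ n, G T A (n + 1) ⊆ T ⁻¹' (G T A n) := by
    intro n x hx
    intro j hj
    have := hx (j + 1) (by omega)
    rwa [Function.iterate_succ_apply] at this
  have hGanti : ∀ n, G T A (n + 1) ⊆ G T A n := fun n x hx j hj => hx j (by omega)
  have hν_mono : ∀ N (S : Set X), MeasurableSet S → ν (N + 1) S ≤ ν N S := by
    intro N S hS
    rw [hν_apply _ _ hS, hν_apply _ _ hS]
    calc m (G T A (N + 1) ∩ T^[N + 1] ⁻¹' S)
        ≤ m (T ⁻¹' (G T A N ∩ T^[N] ⁻¹' S)) := by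
          apply measure_mono
          rw [Set.preimage_inter, ← pre_succ]
          exact Set.inter_subset_inter_left _ (hGsub N)
      _ = m (G T A N ∩ T^[N] ⁻¹' S) :=
          hT.measure_preimage ((hGmeas N).inter (hS.preimage (hTk N))).nullMeasurableSet
  have hν_le : ∀ N (S : Set X), MeasurableSet S → ν N S ≤ m S := by
    intro N S hS
    rw [hν_apply _ _ hS]
    calc m (G T A N ∩ T^[N] ⁻¹' S) ≤ m (T^[N] ⁻¹' S) := measure_mono Set.inter_subset_right
      _ = m S := (hT.iterate N).measure_preimage hS.nullMeasurableSet
  have hν_lemeas : ∀ N, ν N ≤ m := fun N => Measure.le_iff.mpr fun S hS => hν_le N S hS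
  have hν_sf : ∀ N, SigmaFinite (ν N) := fun N => Measure.sigmaFinite_of_le m (hν_lemeas N)
  have hν_ac : ∀ N, ν N ≪ m := fun N => Measure.absolutelyContinuous_of_le (hν_lemeas N)
  set R : ℕ → X → ℝ≥0∞ := fun N => (ν N).rnDeriv m with hR
  have hRmeas : ∀ N, Measurable (R N) := fun N => Measure.measurable_rnDeriv _ _
  have hR_int : ∀ N (S : Set X), MeasurableSet S → ∫⁻ x in S, R N x ∂m = ν N S := by
    intro N S hS
    haveI := hν_sf N
    exact Measure.setLIntegral_rnDeriv' (hν_ac N) hS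
  have hR_le_one : ∀ N, R N ≤ᵐ[m] fun _ => (1 : ℝ≥0∞) := by
    intro N
    refine ae_le_of_forall_setLIntegral_le_of_sigmaFinite (hRmeas N) fun S hS _ => ?_
    rw [hR_int N S hS]
    calc ν N S ≤ m S := hν_le N S hS
      _ = ∫⁻ _ in S, 1 ∂m := (setLIntegral_one S).symm
  have hR_mono : ∀ N, R (N + 1) ≤ᵐ[m] R N := by
    intro N
    refine ae_le_of_forall_setLIntegral_le_of_sigmaFinite (hRmeas (N + 1)) fun S hS _ => ?_
    rw [hR_int (N + 1) S hS, hR_int N S hS]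
    exact hν_mono N S hS
  set Rl : X → ℝ≥0∞ := fun x => ⨅ N, R N x with hRl
  have hRlmeas : Measurable Rl := Measurable.iInf hRmeas
  have hRl_le : ∀ N x, Rl x ≤ R N x := fun N x => iInf_le _ N
  have hRl_tendsto : ∀ᵐ x ∂m, Tendsto (fun N => R N x) atTop (𝓝 (Rl x)) := by
    filter_upwards [ae_all_iff.mpr hR_mono] with x hx
    exact tendsto_atTop_iInf (antitone_nat_of_succ_le hx)
  have hRl_le_one : Rl ≤ᵐ[m] fun _ => (1 : ℝ≥0∞) := by
    filter_upwards [hR_le_one 0] with x hx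
    exact le_trans (hRl_le 0 x) hx
  have hlim : ∀ (S : Set X), MeasurableSet S → m S ≠ ∞ →
      Tendsto (fun N => ν N S) atTop (𝓝 (∫⁻ x in S, Rl x ∂m)) := by
    intro S hS hSfin
    have he : ∀ N, ν N S = ∫⁻ x in S, R N x ∂m := fun N => (hR_int N S hS).symm
    simp_rw [he]
    refine tendsto_lintegral_of_dominated_convergence (fun _ => (1 : ℝ≥0∞))
      (fun N => hRmeas N) (fun N => ae_restrict_of_ae (hR_le_one N)) ?_
      (ae_restrict_of_ae hRl_tendsto)
    rw [lintegral_const, Measure.restrict_apply_univ, one_mul]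
    exact hSfin
  set μh : Measure X := (m.withDensity Rl).map T with hμh
  have hμh_apply : ∀ (S : Set X), MeasurableSet S → μh S = ∫⁻ x in T ⁻¹' S, Rl x ∂m := by
    intro S hS
    rw [hμh, Measure.map_apply hTm hS, withDensity_apply _ (hS.preimage hTm)]
  have hsetRl_le : ∀ C : Set X, ∫⁻ x in C, Rl x ∂m ≤ m C := by
    intro C
    calc ∫⁻ x in C, Rl x ∂m ≤ ∫⁻ _ in C, 1 ∂m :=
        lintegral_mono_ae (ae_restrict_of_ae hRl_le_one)
      _ = m C := setLIntegral_one C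
  have hμh_le : μh ≤ m := by
    refine Measure.le_iff.mpr fun S hS => ?_
    rw [hμh_apply S hS]
    calc ∫⁻ x in T ⁻¹' S, Rl x ∂m ≤ m (T ⁻¹' S) := hsetRl_le _
      _ = m S := hT.measure_preimage hS.nullMeasurableSet
  haveI hμh_sf : SigmaFinite μh := Measure.sigmaFinite_of_le m hμh_le
  have hμh_ac : μh ≪ m := Measure.absolutelyContinuous_of_le hμh_le
  set gh : X → ℝ≥0∞ := μh.rnDeriv m with hgh
  have hghmeas : Measurable gh := Measure.measurable_rnDeriv _ _
  have hgh_int : ∀ (S : Set X), MeasurableSet S →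
      ∫⁻ x in S, gh x ∂m = ∫⁻ x in T ⁻¹' S, Rl x ∂m := by
    intro S hS
    rw [hgh, Measure.setLIntegral_rnDeriv' hμh_ac hS, hμh_apply S hS]
  have hRg : Rl ≤ᵐ[m] gh := by
    refine ae_le_of_forall_setLIntegral_le_of_sigmaFinite hRlmeas fun S hS hSfin => ?_
    rw [hgh_int S hS]
    have h1 : Tendsto (fun N => ν (N + 1) S) atTop (𝓝 (∫⁻ x in S, Rl x ∂m)) :=
      (hlim S hS hSfin.ne).comp (tendsto_add_atTop_nat 1)
    have h2 : Tendsto (fun N => ν N (T ⁻¹' S)) atTop (𝓝 (∫⁻ x in T ⁻¹' S, Rl x ∂m)) := by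
      refine hlim _ (hS.preimage hTm) ?_
      rw [hT.measure_preimage hS.nullMeasurableSet]
      exact hSfin.ne
    refine le_of_tendsto_of_tendsto' h1 h2 fun N => ?_
    rw [hν_apply _ _ hS, hν_apply _ _ (hS.preimage hTm), ← pre_succ']
    exact measure_mono (Set.inter_subset_inter_left _ (hGanti N))
  set u : X → ℝ≥0∞ := fun x => gh x - Rl x with hu
  have humeas : Measurable u := hghmeas.sub hRlmeas
  have hgu : ∀ᵐ x ∂m, gh x = Rl x + u x := by
    filter_upwards [hRg] with x hx
    exact (add_tsub_cancel_of_le hx).symm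
  have htel : ∀ (S : Set X), MeasurableSet S → ∀ n : ℕ,
      ∫⁻ x in T^[n] ⁻¹' S, Rl x ∂m
        = ∫⁻ x in S, Rl x ∂m + ∑ k ∈ Finset.range n, ∫⁻ x in T^[k] ⁻¹' S, u x ∂m := by
    intro S hS n
    induction n with
    | zero => simp
    | succ n ih =>
      have h1 : ∫⁻ x in T^[n + 1] ⁻¹' S, Rl x ∂m = ∫⁻ x in T^[n] ⁻¹' S, gh x ∂m := by
        rw [hgh_int _ (hS.preimage (hTk n)), ← pre_succ]
      have h2 : ∫⁻ x in T^[n] ⁻¹' S, gh x ∂m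
          = ∫⁻ x in T^[n] ⁻¹' S, Rl x ∂m + ∫⁻ x in T^[n] ⁻¹' S, u x ∂m := by
        rw [← lintegral_add_left hRlmeas]
        exact lintegral_congr_ae (ae_restrict_of_ae hgu)
      rw [h1, h2, ih, Finset.sum_range_succ]
      ring
  have hsum_le : ∀ (S : Set X), MeasurableSet S →
      ∑' k : ℕ, ∫⁻ x in T^[k] ⁻¹' S, u x ∂m ≤ m S := by
    intro S hS
    refine ENNReal.tsum_le_of_sum_range_le fun n => ?_
    calc ∑ k ∈ Finset.range n, ∫⁻ x in T^[k] ⁻¹' S, u x ∂m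
        ≤ ∫⁻ x in S, Rl x ∂m + ∑ k ∈ Finset.range n, ∫⁻ x in T^[k] ⁻¹' S, u x ∂m :=
          le_add_self
      _ = ∫⁻ x in T^[n] ⁻¹' S, Rl x ∂m := (htel S hS n).symm
      _ ≤ m (T^[n] ⁻¹' S) := hsetRl_le _
      _ = m S := (hT.iterate n).measure_preimage hS.nullMeasurableSet
  have hu0 : u =ᵐ[m] 0 := by
    rw [Filter.EventuallyEq, ae_iff]
    by_contra hne
    simp only [Pi.zero_apply] at hne
    have hsub : {x | ¬ u x = 0} ⊆ ⋃ n : ℕ, {x | ((n : ℝ≥0∞))⁻¹ ≤ u x} := by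
      intro x hx
      rcases ENNReal.exists_inv_nat_lt hx with ⟨n, hn⟩
      exact Set.mem_iUnion.mpr ⟨n, hn.le⟩
    have hex : ∃ n : ℕ, m {x | ((n : ℝ≥0∞))⁻¹ ≤ u x} ≠ 0 := by
      by_contra hall
      push_neg at hall
      exact hne (measure_mono_null hsub (measure_iUnion_null fun n => hall n))
    obtain ⟨n, hn⟩ := hex
    have hEmeas : MeasurableSet {x | ((n : ℝ≥0∞))⁻¹ ≤ u x} :=
      humeas measurableSet_Ici
    have hex2 : ∃ i, m ({x | ((n : ℝ≥0∞))⁻¹ ≤ u x} ∩ spanningSets m i) ≠ 0 := by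
      by_contra hall
      push_neg at hall
      refine hn ?_
      have hU : {x | ((n : ℝ≥0∞))⁻¹ ≤ u x}
          = ⋃ i, {x | ((n : ℝ≥0∞))⁻¹ ≤ u x} ∩ spanningSets m i := by
        rw [← Set.inter_iUnion, iUnion_spanningSets, Set.inter_univ]
      rw [hU]
      exact measure_iUnion_null hall
    obtain ⟨i, hi⟩ := hex2
    set S : Set X := {x | ((n : ℝ≥0∞))⁻¹ ≤ u x} ∩ spanningSets m i with hSdef
    have hSmeas : MeasurableSet S := hEmeas.inter (measurableSet_spanningSets m i)
    have hSfin : m S ≠ ∞ :=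
      ((measure_mono Set.inter_subset_right).trans_lt (measure_spanningSets_lt_top m i)).ne
    have hε0 : ((n : ℝ≥0∞))⁻¹ ≠ 0 := ENNReal.inv_ne_zero.mpr (ENNReal.natCast_ne_top n)
    have hkey : ∀ k : ℕ, ((n : ℝ≥0∞))⁻¹ * m (S ∩ T^[k] ⁻¹' S)
        ≤ ∫⁻ x in T^[k] ⁻¹' S, u x ∂m := by
      intro k
      have h1 : ∫⁻ x in S ∩ T^[k] ⁻¹' S, u x ∂m ≤ ∫⁻ x in T^[k] ⁻¹' S, u x ∂m :=
        lintegral_mono_set Set.inter_subset_right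
      refine le_trans ?_ h1
      calc ((n : ℝ≥0∞))⁻¹ * m (S ∩ T^[k] ⁻¹' S)
          = ∫⁻ _ in S ∩ T^[k] ⁻¹' S, ((n : ℝ≥0∞))⁻¹ ∂m := (setLIntegral_const _ _).symm
        _ ≤ ∫⁻ x in S ∩ T^[k] ⁻¹' S, u x ∂m := by
            refine setLIntegral_mono humeas fun x hx => ?_
            exact hx.1.1
    have hbound : ((n : ℝ≥0∞))⁻¹ * ∑' k : ℕ, m (S ∩ T^[k] ⁻¹' S) ≤ m S := by
      rw [← ENNReal.tsum_mul_left]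
      exact le_trans (ENNReal.tsum_le_tsum hkey) (hsum_le S hSmeas)
    rw [poincare_tsum hT hcons hSmeas hi, ENNReal.mul_top hε0] at hbound
    exact hSfin (top_le_iff.mp hbound)
  have hgR : gh =ᵐ[m] Rl := by
    filter_upwards [hgu, hu0] with x h1 h2
    rw [h1, h2]
    simp
  have hzero : ∀ k : ℕ, ∫⁻ x in T^[k] ⁻¹' A, Rl x ∂m = 0 := by
    intro k
    induction k with
    | zero =>
      have hle : ∫⁻ x in T^[0] ⁻¹' A, Rl x ∂m ≤ ν 0 A := by
        simp only [Function.iterate_zero, Set.preimage_id]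
        rw [← hR_int 0 A hA]
        exact lintegral_mono fun x => hRl_le 0 x
      have h0 : ν 0 A = 0 := by
        rw [hν_apply 0 A hA]
        have hempty : G T A 0 ∩ T^[0] ⁻¹' A = ∅ := by
          ext x
          simp only [Set.mem_inter_iff, Set.mem_preimage, Set.mem_empty_iff_false, iff_false]
          rintro ⟨hG, hA'⟩
          exact hG 0 le_rfl hA'
        rw [hempty, measure_empty]
      exact le_antisymm (hle.trans h0.le) zero_le
    | succ k ih =>
      have h1 : ∫⁻ x in T^[k + 1] ⁻¹' A, Rl x ∂m
          = ∫⁻ x in T^[k] ⁻¹' A, gh x ∂m := by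
        rw [hgh_int _ (hA.preimage (hTk k)), ← pre_succ]
      rw [h1, lintegral_congr_ae (ae_restrict_of_ae hgR), ih]
  have hRl0 : Rl =ᵐ[m] 0 := by
    have hzae : ∀ k : ℕ, ∀ᵐ x ∂m, x ∈ T^[k] ⁻¹' A → Rl x = 0 := by
      intro k
      have hmeas := hA.preimage (hTk k)
      have h1 : Rl =ᵐ[m.restrict (T^[k] ⁻¹' A)] 0 :=
        (lintegral_eq_zero_iff hRlmeas).mp (hzero k)
      exact (ae_restrict_iff' hmeas).mp h1
    filter_upwards [hcov, ae_all_iff.mpr hzae] with x hx hz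
    obtain ⟨k, _, hk⟩ := hx
    exact hz k hk
  have hintW : ∫⁻ x in W, Rl x ∂m = 0 := by
    rw [lintegral_congr_ae (ae_restrict_of_ae hRl0)]
    simp
  have hfin : Tendsto (fun N => ν N W) atTop (𝓝 0) := by
    have := hlim W hW hWfin
    rwa [hintW] at this
  have heq : (fun n => m (G T A n ∩ T^[n] ⁻¹' W)) = fun N => ν N W := by
    funext N
    rw [hν_apply N W hW]
  rwa [heq]
lemma tele (hT : MeasurePreserving T m m) (hA : MeasurableSet A)
    {B : Set X} (hB : MeasurableSet B) :
    ∀ n : ℕ, m B = (∑ k ∈ Finset.range n, m (A ∩ (F T A k ∩ T^[k] ⁻¹' B)))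
      + m (F T A n ∩ T^[n] ⁻¹' B) := by
  have hTm : Measurable T := hT.measurable
  have hFmeas : ∀ k, MeasurableSet (F T A k) := measurableSet_F hTm hA
  have hBk : ∀ k : ℕ, MeasurableSet (T^[k] ⁻¹' B) := fun k => hB.preimage (hTm.iterate k)
  intro n
  induction n with
  | zero =>
    simp [F_zero]
  | succ n ih =>
    rw [ih, Finset.sum_range_succ, add_assoc]
    congr 1
    have hsplit : F T A n ∩ T^[n] ⁻¹' B
        = (A ∩ (F T A n ∩ T^[n] ⁻¹' B)) ∪ (Aᶜ ∩ (F T A n ∩ T^[n] ⁻¹' B)) := by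
      rw [← Set.union_inter_distrib_right, Set.union_compl_self, Set.univ_inter]
    have hdisj : Disjoint (A ∩ (F T A n ∩ T^[n] ⁻¹' B)) (Aᶜ ∩ (F T A n ∩ T^[n] ⁻¹' B)) :=
      disjoint_compl_right.mono Set.inter_subset_left Set.inter_subset_left
    have hmeas2 : MeasurableSet (Aᶜ ∩ (F T A n ∩ T^[n] ⁻¹' B)) :=
      hA.compl.inter ((hFmeas n).inter (hBk n))
    have h2 : m (F T A (n + 1) ∩ T^[n + 1] ⁻¹' B) = m (Aᶜ ∩ (F T A n ∩ T^[n] ⁻¹' B)) := by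
      rw [F_succ_eq]
      exact hT.measure_preimage hmeas2.nullMeasurableSet
    calc m (F T A n ∩ T^[n] ⁻¹' B)
        = m (A ∩ (F T A n ∩ T^[n] ⁻¹' B) ∪ Aᶜ ∩ (F T A n ∩ T^[n] ⁻¹' B)) := by
          rw [← hsplit]
      _ = m (A ∩ (F T A n ∩ T^[n] ⁻¹' B)) + m (Aᶜ ∩ (F T A n ∩ T^[n] ⁻¹' B)) :=
          measure_union hdisj hmeas2
      _ = m (A ∩ (F T A n ∩ T^[n] ⁻¹' B)) + m (F T A (n + 1) ∩ T^[n + 1] ⁻¹' B) := by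
          rw [h2]
lemma kac_fin (hT : MeasurePreserving T m m) (hA : MeasurableSet A)
    (hcons : ∀ B : Set X, MeasurableSet B → ∀ᵐ x ∂m.restrict B, ∃ n, 1 ≤ n ∧ T^[n] x ∈ B)
    (hcov : ∀ᵐ x ∂m, ∃ k, 1 ≤ k ∧ T^[k] x ∈ A)
    {B : Set X} (hB : MeasurableSet B) (hBfin : m B ≠ ∞) :
    m B = ∑' k : ℕ, m (A ∩ (F T A k ∩ T^[k] ⁻¹' B)) := by
  have hTm : Measurable T := hT.measurable
  have hGmeas : ∀ n, MeasurableSet (G T A n) := measurableSet_G hTm hA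
  have hr : Tendsto (fun n => m (F T A n ∩ T^[n] ⁻¹' B)) atTop (𝓝 0) := by
    rw [← tendsto_add_atTop_iff_nat 1]
    have heq : (fun n => m (F T A (n + 1) ∩ T^[n + 1] ⁻¹' B))
        = fun n => m (G T A n ∩ T^[n] ⁻¹' B) := by
      funext n
      rw [F_succ_eq', hT.measure_preimage
        ((hGmeas n).inter (hB.preimage (hTm.iterate n))).nullMeasurableSet]
    exact heq ▸ crux hT hA hcons hcov hB hBfin
  have hS : Tendsto (fun n => ∑ k ∈ Finset.range n, m (A ∩ (F T A k ∩ T^[k] ⁻¹' B)))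
      atTop (𝓝 (∑' k : ℕ, m (A ∩ (F T A k ∩ T^[k] ⁻¹' B)))) :=
    ENNReal.tendsto_nat_tsum _
  have hadd := hS.add hr
  rw [add_zero] at hadd
  have hconst : (fun n => (∑ k ∈ Finset.range n, m (A ∩ (F T A k ∩ T^[k] ⁻¹' B)))
      + m (F T A n ∩ T^[n] ⁻¹' B)) = fun _ => m B :=
    funext fun n => (tele hT hA hB n).symm
  rw [hconst] at hadd
  exact (tendsto_nhds_unique hadd tendsto_const_nhds).symm
lemma rhs_eq (hT : MeasurePreserving T m m) (hA : MeasurableSet A)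
    (hcov : ∀ᵐ x ∂m, ∃ k, 1 ≤ k ∧ T^[k] x ∈ A) {B : Set X} (hB : MeasurableSet B) :
    ∫⁻ x in A, ∑ k ∈ Finset.range (tauA T A x),
        B.indicator (fun _ => (1 : ℝ≥0∞)) (T^[k] x) ∂m
      = ∑' k : ℕ, m (A ∩ (F T A k ∩ T^[k] ⁻¹' B)) := by
  have hTm : Measurable T := hT.measurable
  have hFmeas : ∀ k, MeasurableSet (F T A k) := measurableSet_F hTm hA
  have hmeask : ∀ k : ℕ, MeasurableSet (F T A k ∩ T^[k] ⁻¹' B) :=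
    fun k => (hFmeas k).inter (hB.preimage (hTm.iterate k))
  have hae : ∀ᵐ x ∂m.restrict A,
      (∑ k ∈ Finset.range (tauA T A x), B.indicator (fun _ => (1 : ℝ≥0∞)) (T^[k] x))
        = ∑' k : ℕ, (F T A k ∩ T^[k] ⁻¹' B).indicator (1 : X → ℝ≥0∞) x := by
    filter_upwards [ae_restrict_of_ae hcov] with x hx
    have hne : {n : ℕ | 1 ≤ n ∧ T^[n] x ∈ A}.Nonempty := hx
    have hmem : 1 ≤ tauA T A x ∧ T^[tauA T A x] x ∈ A := Nat.sInf_mem hne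
    rw [tsum_eq_sum (s := Finset.range (tauA T A x)) ?_]
    · refine (Finset.sum_congr rfl fun k hk => ?_).symm
      rw [Finset.mem_range] at hk
      have hxF : x ∈ F T A k := by
        intro j h1 h2 hjA
        have : tauA T A x ≤ j := Nat.sInf_le ⟨h1, hjA⟩
        omega
      by_cases hxB : T^[k] x ∈ B
      · rw [Set.indicator_of_mem hxB, Set.indicator_of_mem
          (Set.mem_inter hxF (show x ∈ T^[k] ⁻¹' B from hxB)) (1 : X → ℝ≥0∞)]
        rfl
      · rw [Set.indicator_of_notMem hxB, Set.indicator_of_notMem (fun hc => hxB hc.2)]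
    · intro k hk
      rw [Finset.mem_range, not_lt] at hk
      apply Set.indicator_of_notMem
      rintro ⟨hF', -⟩
      exact hF' (tauA T A x) hmem.1 hk hmem.2
  rw [lintegral_congr_ae hae,
    lintegral_tsum fun k => (measurable_one.indicator (hmeask k)).aemeasurable]
  refine tsum_congr fun k => ?_
  have h := lintegral_indicator_one (μ := m.restrict A) (hmeask k)
  rw [Measure.restrict_apply (hmeask k)] at h
  rw [h, Set.inter_comm]
end KacAux

/-- Kac's formula: for a conservative measure preserving `T` on a
σ-finite space and a set `A` with `X = ⋃_{k≥1} T⁻ᵏ A (mod m)`, every measurable `B`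
satisfies `m(B) = ∫_A ∑_{k=0}^{τ_A(x)-1} 1_B(Tᵏ x) dm(x)`. -/
theorem stmt6 {X : Type*} [MeasurableSpace X] (m : Measure X) [SigmaFinite m]
    (T : X → X) (hT : MeasurePreserving T m m)
    (hcons : ∀ B : Set X, MeasurableSet B → ∀ᵐ x ∂m.restrict B, ∃ n, 1 ≤ n ∧ T^[n] x ∈ B)
    (A : Set X) (hA : MeasurableSet A)
    (hcov : ∀ᵐ x ∂m, ∃ k, 1 ≤ k ∧ T^[k] x ∈ A) :
    ∀ B : Set X, MeasurableSet B →
      m B = ∫⁻ x in A, ∑ k ∈ Finset.range (tauA T A x),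
        B.indicator (fun _ => (1 : ℝ≥0∞)) (T^[k] x) ∂m := by
  intro B hB
  rw [KacAux.rhs_eq hT hA hcov hB]
  have hTm : Measurable T := hT.measurable
  have hFmeas : ∀ k, MeasurableSet (KacAux.F T A k) := KacAux.measurableSet_F hTm hA
  set Bp : ℕ → Set X := fun i => B ∩ disjointed (spanningSets m) i with hBp
  have hDmeas : ∀ i, MeasurableSet (disjointed (spanningSets m) i) :=
    MeasurableSet.disjointed (measurableSet_spanningSets m)
  have hBpmeas : ∀ i, MeasurableSet (Bp i) := fun i => hB.inter (hDmeas i)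
  have hBpdisj : Pairwise (Function.onFun Disjoint Bp) := fun i j hij =>
    ((disjoint_disjointed (spanningSets m)) hij).mono Set.inter_subset_right
      Set.inter_subset_right
  have hBpU : (⋃ i, Bp i) = B := by
    rw [hBp, ← Set.inter_iUnion, iUnion_disjointed, iUnion_spanningSets, Set.inter_univ]
  have hBpfin : ∀ i, m (Bp i) ≠ ∞ := fun i =>
    ((measure_mono (Set.inter_subset_right.trans (disjointed_subset _ _))).trans_lt
      (measure_spanningSets_lt_top m i)).ne
  have hkac : ∀ i, m (Bp i) = ∑' k : ℕ, m (A ∩ (KacAux.F T A k ∩ T^[k] ⁻¹' (Bp i))) :=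
    fun i => KacAux.kac_fin hT hA hcons hcov (hBpmeas i) (hBpfin i)
  calc m B = ∑' i : ℕ, m (Bp i) := by
        rw [← hBpU]
        exact measure_iUnion hBpdisj hBpmeas
    _ = ∑' i : ℕ, ∑' k : ℕ, m (A ∩ (KacAux.F T A k ∩ T^[k] ⁻¹' (Bp i))) := tsum_congr hkac
    _ = ∑' k : ℕ, ∑' i : ℕ, m (A ∩ (KacAux.F T A k ∩ T^[k] ⁻¹' (Bp i))) := ENNReal.tsum_comm
    _ = ∑' k : ℕ, m (A ∩ (KacAux.F T A k ∩ T^[k] ⁻¹' B)) := by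
        refine tsum_congr fun k => ?_
        have hdisj2 : Pairwise (Function.onFun Disjoint
            fun i => A ∩ (KacAux.F T A k ∩ T^[k] ⁻¹' (Bp i))) := by
          intro i j hij
          refine ((hBpdisj hij).preimage (T^[k])).mono ?_ ?_
          · exact Set.inter_subset_right.trans Set.inter_subset_right
          · exact Set.inter_subset_right.trans Set.inter_subset_right
        have hmeas2 : ∀ i, MeasurableSet (A ∩ (KacAux.F T A k ∩ T^[k] ⁻¹' (Bp i))) :=
          fun i => hA.inter ((hFmeas k).inter ((hBpmeas i).preimage (hTm.iterate k)))
        rw [← measure_iUnion hdisj2 hmeas2]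
        congr 1
        rw [← hBpU]
        rw [Set.preimage_iUnion]
        rw [← Set.inter_iUnion, ← Set.inter_iUnion]
end

section
/- Let T be a measurable transformation of a measurable space (X, F), A ∈ F nonempty, and m_0 a measure on A with m_0(A \ ∪_{k≥1} T^{-k}A) = 0 that is invariant under the induced map T_A. Then the measure m(B) := ∫_A ∑_{k=0}^{τ_A(x)−1} 1(T^k x ∈ B) m_0(dx) on (X, F) is invariant for T, its restriction to A equals m_0, and m({τ_A = ∞}) = 0. -/
open MeasureTheory Set ENNReal

/-- The induced map `T_A x = T^[τ_A x] x`. -/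
noncomputable def inducedMap {X : Type*} (T : X → X) (A : Set X) (x : X) : X :=
  T^[tauA T A x] x

section Aux

variable {X : Type*} (T : X → X) (A : Set X)

lemma tauA_spec {x : X} (h : ∃ k, 1 ≤ k ∧ T^[k] x ∈ A) :
    1 ≤ tauA T A x ∧ T^[tauA T A x] x ∈ A :=
  Nat.sInf_mem h

lemma lt_tauA_iff {k : ℕ} {x : X} :
    k < tauA T A x ↔ (∃ n, 1 ≤ n ∧ T^[n] x ∈ A) ∧ ∀ m, m ≤ k → ¬(1 ≤ m ∧ T^[m] x ∈ A) := by
  constructor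
  · intro h
    have hne : ∃ n, 1 ≤ n ∧ T^[n] x ∈ A := by
      by_contra hc
      have : {n : ℕ | 1 ≤ n ∧ T^[n] x ∈ A} = ∅ := by
        ext n; simpa using fun h1 h2 => hc ⟨n, h1, h2⟩
      simp [tauA, this] at h
    refine ⟨hne, fun m hm hmem => ?_⟩
    have := Nat.sInf_le (s := {n : ℕ | 1 ≤ n ∧ T^[n] x ∈ A}) hmem
    have : tauA T A x ≤ m := this
    omega
  · rintro ⟨hne, hall⟩
    have hmem := (tauA_spec T A hne)
    by_contra hc
    exact hall _ (by omega) ⟨hmem.1, hmem.2⟩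

lemma not_mem_A_of_lt_tauA {k : ℕ} {x : X} (h1 : 1 ≤ k) (h2 : k < tauA T A x) :
    T^[k] x ∉ A := by
  intro hmem
  exact ((lt_tauA_iff T A).1 h2).2 k le_rfl ⟨h1, hmem⟩

variable [MeasurableSpace X]

lemma measurableSet_return (hT : Measurable T) (hA : MeasurableSet A) (n : ℕ) :
    MeasurableSet {x | 1 ≤ n ∧ T^[n] x ∈ A} := by
  by_cases h : 1 ≤ n
  · have : {x | 1 ≤ n ∧ T^[n] x ∈ A} = T^[n] ⁻¹' A := by ext x; simp [h]
    rw [this]; exact (hT.iterate n) hA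
  · have : {x | 1 ≤ n ∧ T^[n] x ∈ A} = ∅ := by ext x; simp [h]
    rw [this]; exact MeasurableSet.empty

lemma measurableSet_lt_tauA (hT : Measurable T) (hA : MeasurableSet A) (k : ℕ) :
    MeasurableSet {x | k < tauA T A x} := by
  have : {x | k < tauA T A x} =
      (⋃ n, {x | 1 ≤ n ∧ T^[n] x ∈ A}) ∩ ⋂ m, ⋂ _ : m ≤ k, {x | 1 ≤ m ∧ T^[m] x ∈ A}ᶜ := by
    ext x
    simp only [lt_tauA_iff, Set.mem_inter_iff, Set.mem_iUnion, Set.mem_iInter,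
      Set.mem_compl_iff, Set.mem_setOf_eq]
  rw [this]
  exact (MeasurableSet.iUnion fun n => measurableSet_return T A hT hA n).inter
    (MeasurableSet.iInter fun m => MeasurableSet.iInter fun _ =>
      (measurableSet_return T A hT hA m).compl)

lemma measurable_tauA (hT : Measurable T) (hA : MeasurableSet A) :
    Measurable (tauA T A) := by
  apply measurable_to_countable'
  intro n
  cases n with
  | zero =>
    have : tauA T A ⁻¹' {0} = {x | 0 < tauA T A x}ᶜ := by
      ext x
      simp only [Set.mem_preimage, Set.mem_singleton_iff, Set.mem_compl_iff, Set.mem_setOf_eq]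
      omega
    rw [this]; exact (measurableSet_lt_tauA T A hT hA 0).compl
  | succ m =>
    have : tauA T A ⁻¹' {m + 1} = {x | m < tauA T A x} ∩ {x | m + 1 < tauA T A x}ᶜ := by
      ext x
      simp only [Set.mem_preimage, Set.mem_singleton_iff, Set.mem_inter_iff,
        Set.mem_compl_iff, Set.mem_setOf_eq]
      omega
    rw [this]
    exact (measurableSet_lt_tauA T A hT hA m).inter
      (measurableSet_lt_tauA T A hT hA (m + 1)).compl

lemma measurable_inducedMap (hT : Measurable T) (hA : MeasurableSet A) :
    Measurable (inducedMap T A) := by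
  intro s hs
  have : inducedMap T A ⁻¹' s = ⋃ n, (tauA T A ⁻¹' {n} ∩ T^[n] ⁻¹' s) := by
    ext x
    simp only [Set.mem_preimage, Set.mem_iUnion, Set.mem_inter_iff, Set.mem_singleton_iff]
    constructor
    · intro h; exact ⟨tauA T A x, rfl, h⟩
    · rintro ⟨n, hn, h⟩; rw [inducedMap, hn]; exact h
  rw [this]
  exact MeasurableSet.iUnion fun n =>
    (measurable_tauA T A hT hA (measurableSet_singleton n)).inter ((hT.iterate n) hs)

lemma lint_ind {X : Type*} [MeasurableSpace X] (μ : Measure X) {s : Set X}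
    (hs : MeasurableSet s) :
    (∫⁻ x, s.indicator (fun _ => (1 : ℝ≥0∞)) x ∂μ) = μ s :=
  lintegral_indicator_one hs

end Aux

/-- given a measure `m₀` on `A`, concentrated on points returning to `A`
and invariant under the induced map `T_A`, the measure
`m(B) = ∫_A ∑_{k=0}^{τ_A(x)-1} 1_B(Tᵏ x) dm₀(x)` is invariant for `T`, restricts
to `m₀` on `A`, and gives zero mass to `{τ_A = ∞}`. -/
theorem stmt7 {X : Type*} [MeasurableSpace X] (T : X → X) (hT : Measurable T)
    (A : Set X) (hA : MeasurableSet A) (hne : A.Nonempty)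
    (m0 : Measure X) (hconc : m0 Aᶜ = 0)
    (hsupp : m0 (A ∩ {x | ¬ ∃ k, 1 ≤ k ∧ T^[k] x ∈ A}) = 0)
    (hinv0 : ∀ B : Set X, MeasurableSet B → B ⊆ A → m0 (inducedMap T A ⁻¹' B) = m0 B) :
    ∃ m : Measure X,
      (∀ B : Set X, MeasurableSet B →
        m B = ∫⁻ x in A, ∑ k ∈ Finset.range (tauA T A x),
          B.indicator (fun _ => (1 : ℝ≥0∞)) (T^[k] x) ∂m0) ∧
      (∀ B : Set X, MeasurableSet B → m (T ⁻¹' B) = m B) ∧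
      m.restrict A = m0 ∧
      m {x | ¬ ∃ n, 1 ≤ n ∧ T^[n] x ∈ A} = 0 := by
  classical
  set τ := tauA T A with hτdef
  -- the measure
  set m : Measure X :=
    Measure.sum (fun k => Measure.map (T^[k]) (m0.restrict (A ∩ {x | k < τ x}))) with hmdef
  -- a.e. on A (w.r.t. m0 restricted to A), τ is positive and T_A maps into A
  have haeA : ∀ᵐ x ∂(m0.restrict A), 0 < τ x ∧ inducedMap T A x ∈ A := by
    rw [ae_iff, Measure.restrict_apply' hA]
    refine measure_mono_null (fun x hx => ?_) hsupp
    obtain ⟨hx1, hx2⟩ := hx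
    simp only [Set.mem_setOf_eq, not_and] at hx1
    refine ⟨hx2, fun hret => ?_⟩
    obtain ⟨h1, h2⟩ := tauA_spec T A hret
    exact hx1 h1 h2
  -- the formula for m
  have hform : ∀ B : Set X, MeasurableSet B →
      m B = ∫⁻ x in A, ∑ k ∈ Finset.range (τ x),
        B.indicator (fun _ => (1 : ℝ≥0∞)) (T^[k] x) ∂m0 := by
    intro B hB
    have hmes : ∀ k : ℕ, MeasurableSet ({x | k < τ x} ∩ T^[k] ⁻¹' B) := fun k =>
      (measurableSet_lt_tauA T A hT hA k).inter ((hT.iterate k) hB)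
    have hpt : ∀ x, (∑ k ∈ Finset.range (τ x),
        B.indicator (fun _ => (1 : ℝ≥0∞)) (T^[k] x)) =
        ∑' k : ℕ, ({x | k < τ x} ∩ T^[k] ⁻¹' B).indicator (fun _ => (1 : ℝ≥0∞)) x := by
      intro x
      rw [tsum_eq_sum (s := Finset.range (τ x)) ?_]
      · refine Finset.sum_congr rfl fun k hk => ?_
        rw [Finset.mem_range] at hk
        simp [Set.indicator_apply, hk]
      · intro k hk
        rw [Finset.mem_range] at hk
        exact Set.indicator_of_notMem (fun h => hk h.1) _
    calc m B = ∑' k : ℕ, m0 (T^[k] ⁻¹' B ∩ (A ∩ {x | k < τ x})) := by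
          rw [hmdef, Measure.sum_apply _ hB]
          refine tsum_congr fun k => ?_
          rw [Measure.map_apply (hT.iterate k) hB,
            Measure.restrict_apply ((hT.iterate k) hB)]
      _ = ∑' k : ℕ, (m0.restrict A) ({x | k < τ x} ∩ T^[k] ⁻¹' B) := by
          refine tsum_congr fun k => ?_
          rw [Measure.restrict_apply (hmes k)]
          congr 1
          ext x; constructor
          · rintro ⟨h1, h2, h3⟩; exact ⟨⟨h3, h1⟩, h2⟩
          · rintro ⟨⟨h1, h2⟩, h3⟩; exact ⟨h2, h3, h1⟩
      _ = ∑' k : ℕ, ∫⁻ x in A,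
            ({x | k < τ x} ∩ T^[k] ⁻¹' B).indicator (fun _ => (1 : ℝ≥0∞)) x ∂m0 := by
          refine tsum_congr fun k => ?_
          exact (lint_ind (m0.restrict A) (hmes k)).symm
      _ = ∫⁻ x in A, ∑' k : ℕ,
            ({x | k < τ x} ∩ T^[k] ⁻¹' B).indicator (fun _ => (1 : ℝ≥0∞)) x ∂m0 := by
          rw [← lintegral_tsum fun k =>
            ((measurable_const.indicator (hmes k)).aemeasurable)]
      _ = ∫⁻ x in A, ∑ k ∈ Finset.range (τ x),
            B.indicator (fun _ => (1 : ℝ≥0∞)) (T^[k] x) ∂m0 := by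
          exact lintegral_congr fun x => (hpt x).symm
  -- key computation: ∫_A 1_B(T_A x) dm0 = m0 (B ∩ A)
  have hTA : ∀ B : Set X, MeasurableSet B →
      (∫⁻ x in A, B.indicator (fun _ => (1 : ℝ≥0∞)) (inducedMap T A x) ∂m0) = m0 (B ∩ A) := by
    intro B hB
    have hι := measurable_inducedMap T A hT hA
    have h1 : (∫⁻ x in A, B.indicator (fun _ => (1 : ℝ≥0∞)) (inducedMap T A x) ∂m0)
        = (m0.restrict A) (inducedMap T A ⁻¹' B) := by
      rw [← lint_ind (m0.restrict A) (hι hB)]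
      exact lintegral_congr fun x => by simp [Set.indicator_apply]
    rw [h1, Measure.restrict_apply (hι hB)]
    -- replace by preimage of B ∩ A
    have hnull : m0 ((inducedMap T A ⁻¹' B ∩ A) \ (inducedMap T A ⁻¹' (B ∩ A) ∩ A)) = 0 := by
      refine measure_mono_null (fun x hx => ?_) hsupp
      obtain ⟨⟨hxB, hxA⟩, hnot⟩ := hx
      refine ⟨hxA, fun hret => ?_⟩
      exact hnot ⟨⟨hxB, (tauA_spec T A hret).2⟩, hxA⟩
    have hsub : inducedMap T A ⁻¹' (B ∩ A) ∩ A ⊆ inducedMap T A ⁻¹' B ∩ A :=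
      fun x hx => ⟨hx.1.1, hx.2⟩
    have heq1 : m0 (inducedMap T A ⁻¹' B ∩ A) = m0 (inducedMap T A ⁻¹' (B ∩ A) ∩ A) := by
      refine le_antisymm ?_ (measure_mono hsub)
      calc m0 (inducedMap T A ⁻¹' B ∩ A)
          ≤ m0 (inducedMap T A ⁻¹' (B ∩ A) ∩ A) +
            m0 ((inducedMap T A ⁻¹' B ∩ A) \ (inducedMap T A ⁻¹' (B ∩ A) ∩ A)) := by
            refine le_trans (measure_mono fun x hx => ?_) (measure_union_le _ _)
            by_cases h : x ∈ inducedMap T A ⁻¹' (B ∩ A) ∩ A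
            · exact Or.inl h
            · exact Or.inr ⟨hx, h⟩
        _ = m0 (inducedMap T A ⁻¹' (B ∩ A) ∩ A) := by rw [hnull, add_zero]
    have heq2 : m0 (inducedMap T A ⁻¹' (B ∩ A) ∩ A) = m0 (inducedMap T A ⁻¹' (B ∩ A)) :=
      measure_inter_conull hconc
    rw [heq1, heq2, hinv0 (B ∩ A) (hB.inter hA) (Set.inter_subset_right)]
  -- invariance
  have hinv : ∀ B : Set X, MeasurableSet B → m (T ⁻¹' B) = m B := by
    intro B hB
    set f : ℕ → X → ℝ≥0∞ := fun k x => B.indicator (fun _ => (1 : ℝ≥0∞)) (T^[k] x) with hfdef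
    have hshift : ∀ x, (∑ k ∈ Finset.range (τ x),
        (T ⁻¹' B).indicator (fun _ => (1 : ℝ≥0∞)) (T^[k] x)) =
        ∑ k ∈ Finset.range (τ x), f (k + 1) x := by
      intro x
      refine Finset.sum_congr rfl fun k _ => ?_
      simp only [hfdef, Function.iterate_succ_apply']
      simp [Set.indicator_apply]
    have hkey : ∀ x, (∑ k ∈ Finset.range (τ x), f (k + 1) x) + f 0 x
        = (∑ k ∈ Finset.range (τ x), f k x) + f (τ x) x := by
      intro x
      rw [← Finset.sum_range_succ' (fun k => f k x) (τ x),
        Finset.sum_range_succ (fun k => f k x) (τ x)]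
    have hf0 : (∫⁻ x in A, f 0 x ∂m0) = m0 (B ∩ A) := by
      simp only [hfdef, Function.iterate_zero_apply]
      rw [lint_ind (m0.restrict A) hB, Measure.restrict_apply hB]
    have hfτ : (∫⁻ x in A, f (τ x) x ∂m0) = m0 (B ∩ A) := by
      rw [← hTA B hB]
      exact lintegral_congr fun x => rfl
    have hintkey : m (T ⁻¹' B) + m0 (B ∩ A) = m B + m0 (B ∩ A) := by
      have hmeasf0 : Measurable (fun x => f 0 x) := by
        simp only [hfdef, Function.iterate_zero_apply]
        exact measurable_const.indicator hB
      have hmeasfτ : Measurable (fun x => f (τ x) x) := by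
        have : (fun x => f (τ x) x)
            = (inducedMap T A ⁻¹' B).indicator (fun _ => (1 : ℝ≥0∞)) := by
          funext x
          simp only [hfdef]
          simp [Set.indicator_apply, inducedMap, hτdef]
        rw [this]
        exact measurable_const.indicator (measurable_inducedMap T A hT hA hB)
      calc m (T ⁻¹' B) + m0 (B ∩ A)
          = (∫⁻ x in A, ∑ k ∈ Finset.range (τ x), f (k + 1) x ∂m0)
            + ∫⁻ x in A, f 0 x ∂m0 := by
            rw [hform (T ⁻¹' B) (hT hB), hf0]
            congr 1
            exact lintegral_congr fun x => hshift x
        _ = ∫⁻ x in A, ((∑ k ∈ Finset.range (τ x), f (k + 1) x) + f 0 x) ∂m0 := by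
            rw [lintegral_add_right _ hmeasf0]
        _ = ∫⁻ x in A, ((∑ k ∈ Finset.range (τ x), f k x) + f (τ x) x) ∂m0 :=
            lintegral_congr fun x => hkey x
        _ = (∫⁻ x in A, ∑ k ∈ Finset.range (τ x), f k x ∂m0)
            + ∫⁻ x in A, f (τ x) x ∂m0 := by
            rw [lintegral_add_right _ hmeasfτ]
        _ = m B + m0 (B ∩ A) := by rw [hform B hB, hfτ]
    by_cases hc : m0 (B ∩ A) = ∞
    · -- both sides are infinite
      have hmB : m B = ∞ := by
        rw [hform B hB]
        refine top_le_iff.1 ?_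
        calc (∞ : ℝ≥0∞) = m0 (B ∩ A) := hc.symm
          _ = ∫⁻ x in A, f 0 x ∂m0 := hf0.symm
          _ ≤ ∫⁻ x in A, ∑ k ∈ Finset.range (τ x), f k x ∂m0 := by
              refine lintegral_mono_ae ?_
              filter_upwards [haeA] with x hx
              exact Finset.single_le_sum (f := fun k => f k x)
                (fun i _ => zero_le) (Finset.mem_range.2 hx.1)
      have hmTB : m (T ⁻¹' B) = ∞ := by
        rw [hform (T ⁻¹' B) (hT hB)]
        refine top_le_iff.1 ?_
        calc (∞ : ℝ≥0∞) = m0 (B ∩ A) := hc.symm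
          _ = ∫⁻ x in A, f (τ x) x ∂m0 := hfτ.symm
          _ ≤ ∫⁻ x in A, ∑ k ∈ Finset.range (τ x),
              (T ⁻¹' B).indicator (fun _ => (1 : ℝ≥0∞)) (T^[k] x) ∂m0 := by
              refine lintegral_mono_ae ?_
              filter_upwards [haeA] with x hx
              rw [hshift x]
              have hmem : τ x - 1 ∈ Finset.range (τ x) := Finset.mem_range.2 (by omega)
              have : f (τ x - 1 + 1) x = f (τ x) x := by
                congr 1; omega
              calc f (τ x) x = f (τ x - 1 + 1) x := this.symm
                _ ≤ ∑ k ∈ Finset.range (τ x), f (k + 1) x :=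
                  Finset.single_le_sum (f := fun k => f (k + 1) x)
                    (fun i _ => zero_le) hmem
      rw [hmB, hmTB]
    · exact (ENNReal.add_left_inj hc).1 hintkey
  refine ⟨m, hform, hinv, ?_, ?_⟩
  · -- restriction to A is m0
    refine Measure.ext fun s hs => ?_
    rw [Measure.restrict_apply hs, hform (s ∩ A) (hs.inter hA)]
    have hae : ∀ᵐ x ∂(m0.restrict A),
        (∑ k ∈ Finset.range (τ x), (s ∩ A).indicator (fun _ => (1 : ℝ≥0∞)) (T^[k] x))
        = (s ∩ A).indicator (fun _ => (1 : ℝ≥0∞)) x := by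
      filter_upwards [haeA] with x hx
      rw [Finset.sum_eq_single_of_mem 0 (Finset.mem_range.2 hx.1) ?_]
      · rw [Function.iterate_zero_apply]
      · intro k hk hk0
        rw [Finset.mem_range] at hk
        refine Set.indicator_of_notMem (fun h => ?_) _
        exact not_mem_A_of_lt_tauA T A (by omega) hk h.2
    rw [lintegral_congr_ae hae, lint_ind (m0.restrict A) (hs.inter hA),
      Measure.restrict_apply (hs.inter hA)]
    rw [Set.inter_assoc, Set.inter_self]
    exact measure_inter_conull hconc
  · -- no-return set is null
    have hBmeas : MeasurableSet {x | ¬ ∃ n, 1 ≤ n ∧ T^[n] x ∈ A} := by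
      have : {x | ¬ ∃ n, 1 ≤ n ∧ T^[n] x ∈ A}
          = (⋃ n, {x | 1 ≤ n ∧ T^[n] x ∈ A})ᶜ := by
        ext x; simp
      rw [this]
      exact (MeasurableSet.iUnion fun n => measurableSet_return T A hT hA n).compl
    rw [hform _ hBmeas]
    have : ∀ x, (∑ k ∈ Finset.range (τ x),
        ({x | ¬ ∃ n, 1 ≤ n ∧ T^[n] x ∈ A}).indicator (fun _ => (1 : ℝ≥0∞)) (T^[k] x)) = 0 := by
      intro x
      refine Finset.sum_eq_zero fun k hk => ?_
      rw [Finset.mem_range] at hk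
      refine Set.indicator_of_notMem (fun h => ?_) _
      simp only [Set.mem_setOf_eq] at h
      have hret := ((lt_tauA_iff T A).1 hk).1
      have hτA := (tauA_spec T A hret).2
      refine h ⟨τ x - k, by omega, ?_⟩
      rw [← Function.iterate_add_apply]
      have : τ x - k + k = τ x := by omega
      rw [this]
      exact hτA
    rw [lintegral_congr fun x => this x]
    simp
end

section
/- Let Y be a topologically irreducible weak Feller Markov chain on a metric space X with a nonzero invariant Borel measure μ. If μ is finite on some nonempty open set, then μ is locally finite (every point has an open neighbourhood of finite μ-measure). -/
open MeasureTheory ProbabilityTheory BoundedContinuousFunction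

/-- `n`-step transition kernel of a Markov kernel. -/
noncomputable def iterK {X : Type*} [MeasurableSpace X] (P : Kernel X X) : ℕ → Kernel X X
  | 0 => Kernel.id
  | n + 1 => P.comp (iterK P n)

section aux

variable {X : Type*} [MeasurableSpace X]

instance iterK_markov (P : Kernel X X) [IsMarkovKernel P] (n : ℕ) :
    IsMarkovKernel (iterK P n) := by
  induction n with
  | zero => rw [iterK]; infer_instance
  | succ n ih => rw [iterK]; exact Kernel.IsMarkovKernel.comp P (iterK P n)

lemma bind_iterK (P : Kernel X X) (μ : Measure X)
    (hinv : μ.bind (fun x => P x) = μ) (n : ℕ) :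
    μ.bind (fun x => iterK P n x) = μ := by
  induction n with
  | zero =>
    have : (fun x => iterK P 0 x) = fun x => Measure.dirac x := by
      funext x; rw [iterK, Kernel.id_apply]
    rw [this]
    exact Measure.bind_dirac
  | succ n ih =>
    have h1 : (fun x => iterK P (n + 1) x)
        = fun x => (iterK P n x).bind (fun y => P y) := by
      funext x; rw [iterK, Kernel.comp_apply]
    rw [h1, ← Measure.bind_bind (iterK P n).measurable.aemeasurable P.measurable.aemeasurable, ih, hinv]

end aux

section cont

variable {X : Type*} [MetricSpace X] [MeasurableSpace X] [BorelSpace X]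

lemma cont_iterK (P : Kernel X X) [IsMarkovKernel P]
    (hFeller : ∀ f : X →ᵇ ℝ, Continuous fun x => ∫ y, f y ∂(P x)) (n : ℕ) :
    ∀ f : X →ᵇ ℝ, (∀ x, f x ∈ Set.Icc (0 : ℝ) 1) →
      Continuous fun y => (∫⁻ z, ENNReal.ofReal (f z) ∂(iterK P n y)).toReal := by
  induction n with
  | zero =>
    intro f hf
    have : (fun y => (∫⁻ z, ENNReal.ofReal (f z) ∂(iterK P 0 y)).toReal) = fun y => f y := by
      funext y
      rw [iterK, Kernel.id_apply,
        lintegral_dirac' y (f.continuous.measurable.ennreal_ofReal),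
        ENNReal.toReal_ofReal (hf y).1]
    rw [this]
    exact f.continuous
  | succ n ih =>
    intro f hf
    set g : X → ℝ := fun w => (∫⁻ z, ENNReal.ofReal (f z) ∂(P w)).toReal with hg
    have hmf : Measurable fun z => ENNReal.ofReal (f z) :=
      f.continuous.measurable.ennreal_ofReal
    have hlt : ∀ w : X, (∫⁻ z, ENNReal.ofReal (f z) ∂(P w)) ≤ 1 := by
      intro w
      calc (∫⁻ z, ENNReal.ofReal (f z) ∂(P w)) ≤ ∫⁻ _, 1 ∂(P w) := by
            refine lintegral_mono fun z => ?_
            simpa using ENNReal.ofReal_le_one.mpr (hf z).2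
        _ = 1 := by simp
    have hg_eq : ∀ w, g w = ∫ z, f z ∂(P w) := by
      intro w
      rw [integral_eq_lintegral_of_nonneg_ae (ae_of_all _ fun z => (hf z).1)
        f.continuous.measurable.aestronglyMeasurable]
    have hgc : Continuous g := by
      have := hFeller f
      simpa [funext hg_eq] using this
    have hg0 : ∀ w, 0 ≤ g w := fun w => ENNReal.toReal_nonneg
    have hg1 : ∀ w, g w ≤ 1 := by
      intro w
      have := ENNReal.toReal_mono ENNReal.one_ne_top (hlt w)
      simpa using this
    set gb : X →ᵇ ℝ := BoundedContinuousFunction.ofNormedAddCommGroup g hgc 1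
      (fun w => by rw [Real.norm_eq_abs, abs_le]; exact ⟨by linarith [hg0 w], hg1 w⟩) with hgb
    have hgbc : ∀ w, gb w = g w := fun w => rfl
    have key : (fun y => (∫⁻ z, ENNReal.ofReal (f z) ∂(iterK P (n + 1) y)).toReal)
        = fun y => (∫⁻ w, ENNReal.ofReal (gb w) ∂(iterK P n y)).toReal := by
      funext y
      rw [iterK, Kernel.comp_apply, Measure.lintegral_bind P.measurable.aemeasurable hmf.aemeasurable]
      congr 1
      refine lintegral_congr fun w => ?_
      rw [hgbc, hg, ENNReal.ofReal_toReal (ne_top_of_le_ne_top ENNReal.one_ne_top (hlt w))]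
    rw [key]
    exact ih gb fun w => ⟨hg0 w, hg1 w⟩

end cont

/-- a topologically irreducible weak Feller chain with a nonzero
invariant Borel measure `μ` that is finite on some nonempty open set has a
locally finite `μ`. -/
theorem stmt8 {X : Type*} [MetricSpace X] [MeasurableSpace X] [BorelSpace X]
    (P : Kernel X X) [IsMarkovKernel P]
    (hFeller : ∀ f : X →ᵇ ℝ, Continuous fun x => ∫ y, f y ∂(P x))
    (hirr : ∀ x : X, ∀ G : Set X, IsOpen G → G.Nonempty →
      ∃ n, 1 ≤ n ∧ 0 < iterK P n x G)
    (μ : Measure X) (hμ : μ ≠ 0) (hinv : μ.bind (fun x => P x) = μ)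
    (hfin : ∃ G : Set X, IsOpen G ∧ G.Nonempty ∧ μ G < ⊤) :
    ∀ x : X, ∃ U : Set X, IsOpen U ∧ x ∈ U ∧ μ U < ⊤ := by
  obtain ⟨G, hGopen, hGne, hGfin⟩ := hfin
  intro x
  obtain ⟨n, -, hn⟩ := hirr x G hGopen hGne
  set ν : Measure X := iterK P n x with hν
  haveI : IsProbabilityMeasure ν := IsMarkovKernel.isProbabilityMeasure x
  -- inner regularity: find a closed set F ⊆ G with ν F > 0
  obtain ⟨F, hFG, hFclosed, hFpos⟩ :=
    hGopen.measurableSet.exists_lt_isClosed_of_ne_top (measure_ne_top ν G) hn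
  -- Urysohn function: 0 on Gᶜ, 1 on F
  obtain ⟨f, hf0, hf1, hficc⟩ := exists_continuous_zero_one_of_isClosed
    hGopen.isClosed_compl hFclosed (Set.disjoint_compl_left_iff_subset.mpr hFG)
  set fb : X →ᵇ ℝ := BoundedContinuousFunction.ofNormedAddCommGroup f f.continuous 1
    (fun w => by rw [Real.norm_eq_abs, abs_le]; exact ⟨by linarith [(hficc w).1], (hficc w).2⟩)
    with hfb
  have hfbc : ∀ w, fb w = f w := fun w => rfl
  set h : X → ℝ := fun y => (∫⁻ z, ENNReal.ofReal (fb z) ∂(iterK P n y)).toReal with hh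
  have hhc : Continuous h := cont_iterK P hFeller n fb fun w => hficc w
  have hmf : Measurable fun z => ENNReal.ofReal (fb z) :=
    fb.continuous.measurable.ennreal_ofReal
  -- lower bound : lintegral over any y dominates indicator of F at y = x
  have hFle : ∀ y : X, (iterK P n y) F ≤ ∫⁻ z, ENNReal.ofReal (fb z) ∂(iterK P n y) := by
    intro y
    calc (iterK P n y) F = ∫⁻ z, F.indicator 1 z ∂(iterK P n y) := by
          rw [lintegral_indicator hFclosed.measurableSet]; simp
      _ ≤ ∫⁻ z, ENNReal.ofReal (fb z) ∂(iterK P n y) := by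
          refine lintegral_mono fun z => ?_
          by_cases hz : z ∈ F
          · simp [Set.indicator_of_mem hz, hfbc, hf1 hz]
          · simp [Set.indicator_of_notMem hz]
  -- upper bound : lintegral is dominated by measure of G
  have hGle : ∀ y : X, (∫⁻ z, ENNReal.ofReal (fb z) ∂(iterK P n y)) ≤ (iterK P n y) G := by
    intro y
    calc (∫⁻ z, ENNReal.ofReal (fb z) ∂(iterK P n y))
        ≤ ∫⁻ z, G.indicator 1 z ∂(iterK P n y) := by
          refine lintegral_mono fun z => ?_
          by_cases hz : z ∈ G
          · simp only [Set.indicator_of_mem hz, Pi.one_apply]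
            exact ENNReal.ofReal_le_one.mpr (hfbc z ▸ (hficc z).2)
          · have : f z = 0 := hf0 hz
            simp [Set.indicator_of_notMem hz, hfbc, this]
      _ = (iterK P n y) G := by
          rw [lintegral_indicator hGopen.measurableSet]; simp
  have hfinlt : ∀ y : X, (∫⁻ z, ENNReal.ofReal (fb z) ∂(iterK P n y)) ≠ ⊤ :=
    fun y => ne_top_of_le_ne_top (measure_ne_top _ G) (hGle y)
  -- h x > 0
  have hx0 : 0 < h x := by
    rw [hh]
    have h1 : (iterK P n x) F ≤ ∫⁻ z, ENNReal.ofReal (fb z) ∂(iterK P n x) := hFle x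
    have h2 : (0 : ENNReal) < ∫⁻ z, ENNReal.ofReal (fb z) ∂(iterK P n x) := lt_of_lt_of_le hFpos h1
    exact ENNReal.toReal_pos h2.ne' (hfinlt x)
  set c : ℝ := h x / 2 with hc
  have hcpos : 0 < c := by positivity
  set U : Set X := {y | c < h y} with hU
  refine ⟨U, isOpen_lt continuous_const hhc, ?_, ?_⟩
  · show c < h x
    rw [hc]; linarith
  -- on U, iterK P n y G ≥ ofReal c
  have hUbound : ∀ y ∈ U, ENNReal.ofReal c ≤ (iterK P n y) G := by
    intro y hy
    have : ENNReal.ofReal c ≤ ENNReal.ofReal (h y) := ENNReal.ofReal_le_ofReal (le_of_lt hy)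
    refine this.trans ?_
    rw [hh, ENNReal.ofReal_toReal (hfinlt y)]
    exact hGle y
  have hUmeas : MeasurableSet U :=
    (isOpen_lt continuous_const hhc).measurableSet
  have key : μ U * ENNReal.ofReal c ≤ μ G := by
    calc μ U * ENNReal.ofReal c
        = ∫⁻ y in U, ENNReal.ofReal c ∂μ := by
          rw [setLIntegral_const, mul_comm]
      _ ≤ ∫⁻ y in U, (iterK P n y) G ∂μ := by
          exact setLIntegral_mono ((iterK P n).measurable_coe hGopen.measurableSet)
            fun y hy => hUbound y hy
      _ ≤ ∫⁻ y, (iterK P n y) G ∂μ := setLIntegral_le_lintegral _ _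
      _ = (μ.bind fun y => iterK P n y) G := by
          rw [Measure.bind_apply hGopen.measurableSet (iterK P n).measurable.aemeasurable]
      _ = μ G := by rw [bind_iterK P μ hinv n]
  by_contra hcon
  push_neg at hcon
  have : μ U * ENNReal.ofReal c = ⊤ := by
    rw [top_le_iff.mp hcon, ENNReal.top_mul]
    simpa using (ENNReal.ofReal_pos.mpr hcpos).ne'
  rw [this, top_le_iff] at key
  exact hGfin.ne key
end

section
/- Let Y be a topologically irreducible weak Feller Markov chain on a separable metric space X with a nonzero invariant Borel measure μ. Then μ is strictly positive on every nonempty open set. -/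
open MeasureTheory ProbabilityTheory BoundedContinuousFunction

/-- a topologically irreducible weak Feller chain on a separable
metric space with a nonzero invariant Borel measure `μ` has `μ` strictly positive
on every nonempty open set. -/
theorem stmt9 {X : Type*} [MetricSpace X] [TopologicalSpace.SeparableSpace X]
    [MeasurableSpace X] [BorelSpace X]
    (P : Kernel X X) [IsMarkovKernel P]
    (hFeller : ∀ f : X →ᵇ ℝ, Continuous fun x => ∫ y, f y ∂(P x))
    (hirr : ∀ x : X, ∀ G : Set X, IsOpen G → G.Nonempty →
      ∃ n, 1 ≤ n ∧ 0 < iterK P n x G)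
    (μ : Measure X) (hμ : μ ≠ 0) (hinv : μ.bind (fun x => P x) = μ) :
    ∀ G : Set X, IsOpen G → G.Nonempty → 0 < μ G := by
  intro G hG hGne
  by_contra h
  have hG0 : μ G = 0 := by simpa using h
  -- invariance for all iterates
  have key : ∀ n, μ.bind (fun x => iterK P n x) = μ := by
    intro n
    induction n with
    | zero =>
      simp only [iterK]
      have : (fun x : X => (Kernel.id : Kernel X X) x) = Measure.dirac := by
        funext x; rfl
      rw [this, Measure.bind_dirac]
    | succ n ih =>
      have h1 : (fun x : X => iterK P (n+1) x) = fun x => (iterK P n x).bind (fun y => P y) := by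
        funext x; rfl
      rw [h1, ← Measure.bind_bind (iterK P n).measurable.aemeasurable P.measurable.aemeasurable, ih, hinv]
  have hae : ∀ n, ∀ᵐ x ∂μ, iterK P n x G = 0 := by
    intro n
    have hb : (μ.bind fun x => iterK P n x) G = ∫⁻ x, iterK P n x G ∂μ :=
      Measure.bind_apply hG.measurableSet (iterK P n).measurable.aemeasurable
    have hz : ∫⁻ x, iterK P n x G ∂μ = 0 := by
      rw [← hb, key n, hG0]
    have := (lintegral_eq_zero_iff ((iterK P n).measurable_coe hG.measurableSet)).mp hz
    filter_upwards [this] with x hx using hx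
  have hall : ∀ᵐ x ∂μ, ∀ n, iterK P n x G = 0 := ae_all_iff.mpr hae
  have : (ae μ).NeBot := ae_neBot.mpr hμ
  obtain ⟨x, hx⟩ := hall.exists
  obtain ⟨n, _, hpos⟩ := hirr x G hG hGne
  rw [hx n] at hpos
  exact lt_irrefl 0 hpos
end

section
/- Let Y be a topologically irreducible, topologically recurrent, weak Feller Markov chain on a metric space X. Then for every x ∈ X and every nonempty open set G ⊂ X, the hitting time of G is finite P_x-a.s.: P_x(∃ n ≥ 1, Y_n ∈ G) = 1. -/
open MeasureTheory Set BoundedContinuousFunction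

set_option linter.unusedSectionVars false

namespace Stmt10Aux

open scoped ENNReal

variable {X : Type*} [MetricSpace X] [MeasurableSpace X] [BorelSpace X]

/-- one-step shift on paths -/
def shf : (ℕ → X) → ℕ → X := fun ω n => ω (n + 1)

/-- n-step shift on paths -/
def shfn (n : ℕ) : (ℕ → X) → ℕ → X := fun ω k => ω (k + n)

lemma measurable_shf : Measurable (shf (X := X)) :=
  measurable_pi_lambda _ fun n => measurable_pi_apply (n + 1)

lemma measurable_shfn (n : ℕ) : Measurable (shfn (X := X) n) :=
  measurable_pi_lambda _ fun k => measurable_pi_apply (k + n)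

lemma shfn_zero : shfn (X := X) 0 = id := rfl

lemma shfn_one : shfn (X := X) 1 = shf := rfl

lemma shfn_succ (n : ℕ) : shfn (X := X) (n + 1) = shfn n ∘ shf := rfl

/-- filtration of coordinate σ-algebras -/
def Filt : ℕ → MeasurableSpace (ℕ → X)
  | 0 => MeasurableSpace.comap (fun ω => ω 0) inferInstance
  | n + 1 => MeasurableSpace.comap (fun ω => ω 0) inferInstance ⊔ (Filt n).comap shf

lemma Filt_le : ∀ n, Filt (X := X) n ≤ MeasurableSpace.pi := by
  intro n
  induction n with
  | zero => exact (measurable_pi_apply 0).comap_le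
  | succ n ih =>
      refine sup_le (measurable_pi_apply 0).comap_le ?_
      calc (Filt n).comap shf ≤ MeasurableSpace.pi.comap shf :=
            MeasurableSpace.comap_mono ih
        _ ≤ _ := measurable_shf.comap_le

lemma measurable_eval_filt : ∀ n i, i ≤ n → Measurable[Filt (X := X) n] (fun ω => ω i) := by
  intro n
  induction n with
  | zero =>
      intro i hi
      interval_cases i
      exact Measurable.of_comap_le le_rfl
  | succ n ih =>
      intro i hi
      match i with
      | 0 => exact (Measurable.of_comap_le le_rfl).mono le_sup_left le_rfl
      | (j+1) =>
          have hshf : @Measurable (ℕ → X) (ℕ → X) (Filt (n+1)) (Filt n) shf := by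
            have : @Measurable (ℕ → X) (ℕ → X) ((Filt (X := X) n).comap shf) (Filt n) shf :=
              Measurable.of_comap_le le_rfl
            exact this.mono le_sup_right le_rfl
          have : (fun ω : ℕ → X => ω (j+1)) = (fun ω : ℕ → X => ω j) ∘ shf := rfl
          rw [this]
          exact (ih j (Nat.succ_le_succ_iff.mp hi)).comp hshf

lemma filt_measurableSet {n : ℕ} {S : Set (ℕ → X)} (hS : MeasurableSet[Filt n] S) :
    MeasurableSet S := Filt_le n S hS
section Markov

variable (P : X → Measure (ℕ → X)) [∀ x, IsProbabilityMeasure (P x)]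

/-- one-step marginal -/
noncomputable def stepM (x : X) : Measure X := (P x).map (fun ω => ω 1)

instance (x : X) : IsProbabilityMeasure (stepM P x) :=
  Measure.isProbabilityMeasure_map (measurable_pi_apply 1).aemeasurable

variable (hmeas : ∀ B : Set (ℕ → X), MeasurableSet B → Measurable fun x => P x B)
variable (hstart : ∀ x, P x {ω | ω 0 = x} = 1)
variable (hMarkov : ∀ x, ∀ B : Set (ℕ → X), MeasurableSet B →
      P x ((fun ω n => ω (n + 1)) ⁻¹' B) = ∫⁻ y, P y B ∂((P x).map fun ω => ω 1))

include hmeas in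
lemma measurableP : Measurable P :=
  Measure.measurable_of_measurable_coe P fun s hs => hmeas s hs

lemma measurableSet_start (x : X) : MeasurableSet {ω : ℕ → X | ω 0 = x} := by
  have : {ω : ℕ → X | ω 0 = x} = (fun ω : ℕ → X => ω 0) ⁻¹' {x} := rfl
  rw [this]
  exact (measurable_pi_apply 0) (measurableSet_singleton x)

include hstart in
lemma start_compl_null (x : X) : P x {ω : ℕ → X | ω 0 = x}ᶜ = 0 :=
  (prob_compl_eq_zero_iff (measurableSet_start x)).2 (hstart x)

include hstart in
lemma start_ae (x : X) : ∀ᵐ ω ∂(P x), ω 0 = x := by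
  rw [MeasureTheory.ae_iff]
  exact start_compl_null P hstart x

include hstart in
lemma zero_mem_inter {x : X} {A : Set X} (hA : MeasurableSet A) (hx : x ∈ A)
    {W : Set (ℕ → X)} (hW : MeasurableSet W) :
    P x ((fun ω : ℕ → X => ω 0) ⁻¹' A ∩ W) = P x W := by
  have h1 := measure_inter_add_diff (μ := P x) W ((measurable_pi_apply 0) hA)
  have h2 : P x (W \ (fun ω : ℕ → X => ω 0) ⁻¹' A) = 0 := by
    refine measure_mono_null ?_ (start_compl_null P hstart x)
    intro ω hω
    simp only [mem_diff, mem_preimage] at hω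
    intro h0
    exact hω.2 (by rw [mem_setOf_eq] at h0; rw [h0]; exact hx)
  rw [h2, add_zero, inter_comm] at h1
  exact h1

include hstart in
lemma zero_not_mem_inter {x : X} {A : Set X} (hx : x ∉ A)
    {W : Set (ℕ → X)} :
    P x ((fun ω : ℕ → X => ω 0) ⁻¹' A ∩ W) = 0 := by
  refine measure_mono_null ?_ (start_compl_null P hstart x)
  intro ω hω
  simp only [mem_inter_iff, mem_preimage] at hω
  intro h0
  rw [mem_setOf_eq] at h0
  exact hx (h0 ▸ hω.1)

include hmeas hMarkov in
lemma map_shf (x : X) : (P x).map shf = (stepM P x).bind P := by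
  refine Measure.ext fun s hs => ?_
  rw [Measure.map_apply measurable_shf hs, Measure.bind_apply hs (measurableP P hmeas).aemeasurable]
  exact hMarkov x s hs

end Markov
section Master

variable (P : X → Measure (ℕ → X)) [∀ x, IsProbabilityMeasure (P x)]
variable (hmeas : ∀ B : Set (ℕ → X), MeasurableSet B → Measurable fun x => P x B)
variable (hstart : ∀ x, P x {ω | ω 0 = x} = 1)
variable (hMarkov : ∀ x, ∀ B : Set (ℕ → X), MeasurableSet B →
      P x ((fun ω n => ω (n + 1)) ⁻¹' B) = ∫⁻ y, P y B ∂((P x).map fun ω => ω 1))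

include hmeas hstart hMarkov in
/-- Markov property at time `n`. -/
lemma master : ∀ (n : ℕ) (x : X) (B : Set (ℕ → X)), MeasurableSet B →
    ∀ S : Set (ℕ → X), MeasurableSet[Filt n] S →
      P x (S ∩ shfn n ⁻¹' B) = ∫⁻ ω in S, P (ω n) B ∂(P x) := by
  intro n
  induction n with
  | zero =>
      intro x B hB S hS
      obtain ⟨A, hA, rfl⟩ := hS
      rw [shfn_zero, preimage_id]
      by_cases hx : x ∈ A
      · rw [zero_mem_inter P hstart hA hx hB]
        rw [← lintegral_indicator ((measurable_pi_apply 0) hA) _]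
        have : ∀ᵐ ω ∂(P x),
            ((fun ω₁ : ℕ → X => ω₁ 0) ⁻¹' A).indicator (fun ω₁ => P (ω₁ 0) B) ω = P x B := by
          filter_upwards [start_ae P hstart x] with ω h0
          rw [indicator_of_mem (by simpa [mem_preimage, h0] using hx), h0]
        rw [lintegral_congr_ae this, lintegral_const, measure_univ, mul_one]
      · rw [zero_not_mem_inter P hstart hx]
        rw [← lintegral_indicator ((measurable_pi_apply 0) hA) _]
        have : ∀ᵐ ω ∂(P x),
            ((fun ω₁ : ℕ → X => ω₁ 0) ⁻¹' A).indicator (fun ω₁ => P (ω₁ 0) B) ω = 0 := by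
          filter_upwards [start_ae P hstart x] with ω h0
          rw [indicator_of_notMem (by simpa [mem_preimage, h0] using hx)]
        rw [lintegral_congr_ae this, lintegral_zero]
  | succ n ih =>
      intro x B hB
      -- the generating π-system
      set C : Set (Set (ℕ → X)) :=
        {S | ∃ A : Set X, MeasurableSet A ∧ ∃ S' : Set (ℕ → X), MeasurableSet[Filt n] S' ∧
          S = (fun ω : ℕ → X => ω 0) ⁻¹' A ∩ shf ⁻¹' S'} with hC
      have h_eq : Filt (X := X) (n + 1) = MeasurableSpace.generateFrom C := by
        refine le_antisymm ?_ ?_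
        · show (MeasurableSpace.comap (fun ω : ℕ → X => ω 0) inferInstance)
              ⊔ (Filt n).comap shf ≤ _
          refine sup_le ?_ ?_
          · intro s hs
            obtain ⟨A, hA, rfl⟩ := hs
            refine MeasurableSpace.measurableSet_generateFrom
              ⟨A, hA, univ, MeasurableSet.univ, by simp⟩
          · intro s hs
            obtain ⟨S', hS', rfl⟩ := hs
            refine MeasurableSpace.measurableSet_generateFrom
              ⟨univ, MeasurableSet.univ, S', hS', by simp⟩
        · refine MeasurableSpace.generateFrom_le ?_
          rintro s ⟨A, hA, S', hS', rfl⟩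
          refine MeasurableSet.inter ?_ ?_
          · exact le_sup_left (α := MeasurableSpace (ℕ → X)) _ ⟨A, hA, rfl⟩
          · exact le_sup_right (α := MeasurableSpace (ℕ → X)) _ ⟨S', hS', rfl⟩
      have h_inter : IsPiSystem C := by
        rintro s ⟨A₁, hA₁, S₁, hS₁, rfl⟩ t ⟨A₂, hA₂, S₂, hS₂, rfl⟩ _
        refine ⟨A₁ ∩ A₂, hA₁.inter hA₂, S₁ ∩ S₂, hS₁.inter hS₂, ?_⟩
        ext ω; simp only [mem_inter_iff, mem_preimage]; tauto
      -- the property we prove for all Filt (n+1)-measurable sets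
      set Q : Set (ℕ → X) → Prop := fun S =>
        P x (S ∩ shfn (n+1) ⁻¹' B) = ∫⁻ ω in S, P (ω (n+1)) B ∂(P x) with hQ
      have hWmeas : MeasurableSet (shfn (X := X) (n+1) ⁻¹' B) := (measurable_shfn (n+1)) hB
      have hgmeas : Measurable fun ω : ℕ → X => P (ω (n+1)) B :=
        (hmeas B hB).comp (measurable_pi_apply (n+1))
      have h_basic : ∀ t ∈ C, Q t := by
        rintro t ⟨A, hA, S', hS', rfl⟩
        have hS'pi : MeasurableSet S' := filt_measurableSet hS'
        have hkey : shfn (X := X) (n+1) ⁻¹' B = shf ⁻¹' (shfn n ⁻¹' B) := rfl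
        by_cases hx : x ∈ A
        · show P x _ = _
          rw [hkey]
          have hset : (fun ω : ℕ → X => ω 0) ⁻¹' A ∩ shf ⁻¹' S' ∩ shf ⁻¹' (shfn n ⁻¹' B)
              = (fun ω : ℕ → X => ω 0) ⁻¹' A ∩ shf ⁻¹' (S' ∩ shfn n ⁻¹' B) := by
            rw [preimage_inter, inter_assoc]
          rw [hset,
            zero_mem_inter P hstart hA hx (measurable_shf (hS'pi.inter ((measurable_shfn n) hB)))]
          have hLHS : P x (shf ⁻¹' (S' ∩ shfn n ⁻¹' B))
              = ∫⁻ y, P y (S' ∩ shfn n ⁻¹' B) ∂(stepM P x) :=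
            hMarkov x _ (hS'pi.inter ((measurable_shfn n) hB))
          rw [hLHS]
          have hIH : ∀ y, P y (S' ∩ shfn n ⁻¹' B) = ∫⁻ ω in S', P (ω n) B ∂(P y) :=
            fun y => ih y B hB S' hS'
          rw [lintegral_congr fun y => hIH y]
          -- now the right-hand side
          have hg'meas : Measurable fun ω : ℕ → X => P (ω n) B :=
            (hmeas B hB).comp (measurable_pi_apply n)
          have hindmeas : Measurable (S'.indicator fun ω : ℕ → X => P (ω n) B) :=
            hg'meas.indicator hS'pi
          have hRHS : ∫⁻ ω in ((fun ω : ℕ → X => ω 0) ⁻¹' A ∩ shf ⁻¹' S'),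
                P (ω (n+1)) B ∂(P x)
              = ∫⁻ y, ∫⁻ ω in S', P (ω n) B ∂(P y) ∂(stepM P x) := by
            rw [← lintegral_indicator (((measurable_pi_apply 0) hA).inter (measurable_shf hS'pi)) _]
            have hae : ∀ᵐ ω ∂(P x),
                ((fun ω₁ : ℕ → X => ω₁ 0) ⁻¹' A ∩ shf ⁻¹' S').indicator
                    (fun ω₁ => P (ω₁ (n+1)) B) ω
                  = (S'.indicator fun ω₁ : ℕ → X => P (ω₁ n) B) (shf ω) := by
              filter_upwards [start_ae P hstart x] with ω h0
              by_cases hω : shf ω ∈ S'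
              · have hmem : ω ∈ (fun ω₁ : ℕ → X => ω₁ 0) ⁻¹' A ∩ shf ⁻¹' S' :=
                  ⟨by simp only [mem_preimage, h0]; exact hx, hω⟩
                rw [indicator_of_mem hmem, indicator_of_mem hω]
                rfl
              · rw [indicator_of_notMem hω, indicator_of_notMem (by
                  simp only [mem_inter_iff, mem_preimage]
                  exact fun h => hω h.2)]
            rw [lintegral_congr_ae hae,
              ← lintegral_map hindmeas measurable_shf,
              map_shf P hmeas hMarkov x,
              Measure.lintegral_bind (measurableP P hmeas).aemeasurable hindmeas.aemeasurable]
            refine lintegral_congr fun y => ?_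
            rw [lintegral_indicator hS'pi _]
          rw [hRHS]
        · show P x _ = _
          rw [inter_assoc,
            zero_not_mem_inter P hstart hx]
          rw [← lintegral_indicator ((((measurable_pi_apply 0) hA).inter (measurable_shf hS'pi))) _]
          have : ∀ᵐ ω ∂(P x),
              ((fun ω₁ : ℕ → X => ω₁ 0) ⁻¹' A ∩ shf ⁻¹' S').indicator
                  (fun ω₁ => P (ω₁ (n+1)) B) ω = 0 := by
            filter_upwards [start_ae P hstart x] with ω h0
            rw [indicator_of_notMem (by
              simp only [mem_inter_iff, mem_preimage]
              exact fun h => hx (h0 ▸ h.1))]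
          rw [lintegral_congr_ae this, lintegral_zero]
      have h_univ : Q univ := by
        have := h_basic univ ⟨univ, MeasurableSet.univ, univ, MeasurableSet.univ, by simp⟩
        exact this
      have h_empty : Q ∅ := by
        simp [hQ, Measure.restrict_empty]
      have h_compl : ∀ t, MeasurableSet[Filt (n+1)] t → Q t → Q tᶜ := by
        intro t ht hQt
        have htpi : MeasurableSet t := filt_measurableSet ht
        have hfin : ∫⁻ ω in t, P (ω (n+1)) B ∂(P x) ≠ ∞ := by
          refine ne_of_lt (lt_of_le_of_lt ?_ (by norm_num : (1 : ℝ≥0∞) < ∞))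
          calc ∫⁻ ω in t, P (ω (n+1)) B ∂(P x) ≤ ∫⁻ _ in t, 1 ∂(P x) :=
                setLIntegral_mono measurable_const fun ω _ => prob_le_one
            _ = P x t := setLIntegral_one t
            _ ≤ 1 := prob_le_one
        have hLHS : P x (tᶜ ∩ shfn (n+1) ⁻¹' B)
            = P x (shfn (n+1) ⁻¹' B) - P x (t ∩ shfn (n+1) ⁻¹' B) := by
          have hd : tᶜ ∩ shfn (X := X) (n+1) ⁻¹' B
              = shfn (n+1) ⁻¹' B \ (t ∩ shfn (n+1) ⁻¹' B) := by
            ext ω; simp only [mem_inter_iff, mem_compl_iff, mem_diff]; tauto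
          rw [hd, measure_diff inter_subset_right
            (htpi.inter hWmeas).nullMeasurableSet (measure_ne_top _ _)]
        have hRHS : ∫⁻ ω in tᶜ, P (ω (n+1)) B ∂(P x)
            = ∫⁻ ω, P (ω (n+1)) B ∂(P x) - ∫⁻ ω in t, P (ω (n+1)) B ∂(P x) := by
          have := lintegral_add_compl (fun ω : ℕ → X => P (ω (n+1)) B) htpi (μ := P x)
          rw [← this]
          exact (ENNReal.add_sub_cancel_left hfin).symm
        have hQt' : P x (t ∩ shfn (n+1) ⁻¹' B) = ∫⁻ ω in t, P (ω (n+1)) B ∂(P x) := hQt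
        have hu : P x (univ ∩ shfn (X := X) (n+1) ⁻¹' B)
            = ∫⁻ ω in univ, P (ω (n+1)) B ∂(P x) := h_univ
        rw [univ_inter, Measure.restrict_univ] at hu
        show P x (tᶜ ∩ shfn (n+1) ⁻¹' B) = ∫⁻ ω in tᶜ, P (ω (n+1)) B ∂(P x)
        rw [hLHS, hRHS, hQt', hu]
      have h_union : ∀ f : ℕ → Set (ℕ → X), Pairwise (Function.onFun Disjoint f) →
          (∀ i, MeasurableSet[Filt (n+1)] (f i)) → (∀ i, Q (f i)) → Q (⋃ i, f i) := by
        intro f hdisj hfm hQf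
        have hfpi : ∀ i, MeasurableSet (f i) := fun i => filt_measurableSet (hfm i)
        show P x _ = _
        rw [iUnion_inter, measure_iUnion
            (fun i j hij => ((hdisj hij).mono inter_subset_left inter_subset_left))
            (fun i => (hfpi i).inter hWmeas),
          lintegral_iUnion hfpi hdisj]
        exact tsum_congr fun i => hQf i
      intro S hS
      exact MeasurableSpace.induction_on_inter (m := Filt (n+1)) (C := fun t _ => Q t) h_eq h_inter
        h_empty h_basic h_compl h_union S hS

end Master
lemma Filt_le_succ : ∀ n, Filt (X := X) n ≤ Filt (n+1) := by
  intro n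
  induction n with
  | zero => exact le_sup_left
  | succ n ih =>
      exact sup_le le_sup_left ((MeasurableSpace.comap_mono ih).trans le_sup_right)

lemma Filt_mono : Monotone (Filt (X := X)) := monotone_nat_of_le_succ Filt_le_succ

lemma filt_dist_pt_lt {n i : ℕ} (hi : i ≤ n) (y : X) (c : ℝ) :
    MeasurableSet[Filt (X := X) n] {ω | dist (ω i) y < c} := by
  letI : MeasurableSpace (ℕ → X) := Filt n
  have hc : Measurable fun z : X => dist z y := (continuous_id.dist continuous_const).measurable
  exact measurableSet_lt (hc.comp (measurable_eval_filt n i hi)) measurable_const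

lemma filt_mem {n i : ℕ} (hi : i ≤ n) {A : Set X} (hA : MeasurableSet A) :
    MeasurableSet[Filt (X := X) n] {ω | ω i ∈ A} := by
  letI : MeasurableSpace (ℕ → X) := Filt n
  exact measurable_eval_filt n i hi hA

section Recur

variable (P : X → Measure (ℕ → X)) [∀ x, IsProbabilityMeasure (P x)]
variable (hmeas : ∀ B : Set (ℕ → X), MeasurableSet B → Measurable fun x => P x B)
variable (hstart : ∀ x, P x {ω | ω 0 = x} = 1)
variable (hMarkov : ∀ x, ∀ B : Set (ℕ → X), MeasurableSet B →
      P x ((fun ω n => ω (n + 1)) ⁻¹' B) = ∫⁻ y, P y B ∂((P x).map fun ω => ω 1))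

include hmeas hstart hMarkov in
/-- if `D` is a.s. for every start point in `A` and at time `n` we are in `A`,
then we cannot avoid `D` after time `n`. -/
lemma escape (n : ℕ) (x : X) {S : Set (ℕ → X)} (hS : MeasurableSet[Filt n] S)
    {A : Set X} (hSA : S ⊆ {ω | ω n ∈ A})
    {D : Set (ℕ → X)} (hD : MeasurableSet D) (hfull : ∀ y ∈ A, P y D = 1) :
    P x (S \ shfn n ⁻¹' D) = 0 := by
  have h1 : S \ shfn n ⁻¹' D = S ∩ shfn n ⁻¹' Dᶜ := by
    rw [preimage_compl]; rfl
  rw [h1, master P hmeas hstart hMarkov n x Dᶜ hD.compl S hS]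
  refine le_antisymm ?_ zero_le
  refine le_trans (setLIntegral_mono (f := fun ω : ℕ → X => P (ω n) Dᶜ)
    (g := fun _ => 0) measurable_const fun ω hω => ?_) (by simp)
  exact le_of_eq ((prob_compl_eq_zero_iff hD).2 (hfull (ω n) (hSA hω)))

variable (x : X) (ρ : ℝ)

/-- `RSet k n` : the event that the `(k+1)`-st visit to `ball x ρ` (at times `≥ 1`)
happens at time `n`. -/
def RSet : ℕ → ℕ → Set (ℕ → X)
  | 0, n => {ω | 1 ≤ n ∧ dist (ω n) x < ρ ∧ ∀ m, 1 ≤ m → m < n → ¬ dist (ω m) x < ρ}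
  | (k+1), n => ⋃ m, ⋃ (_ : m < n), RSet k m ∩
      {ω | dist (ω n) x < ρ ∧ ∀ j, m < j → j < n → ¬ dist (ω j) x < ρ}

lemma RSet_filt : ∀ k n, MeasurableSet[Filt (X := X) n] (RSet x ρ k n) := by
  intro k
  induction k with
  | zero =>
      intro n
      show MeasurableSet[Filt (X := X) n]
        {ω | 1 ≤ n ∧ dist (ω n) x < ρ ∧ ∀ m, 1 ≤ m → m < n → ¬ dist (ω m) x < ρ}
      by_cases hn : 1 ≤ n
      · have h1 : {ω : ℕ → X | 1 ≤ n ∧ dist (ω n) x < ρ ∧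
            ∀ m, 1 ≤ m → m < n → ¬ dist (ω m) x < ρ}
            = {ω : ℕ → X | dist (ω n) x < ρ} ∩
              ⋂ (m : ℕ), ⋂ (_ : 1 ≤ m), ⋂ (_ : m < n), {ω : ℕ → X | dist (ω m) x < ρ}ᶜ := by
          ext ω
          simp only [mem_setOf_eq, mem_inter_iff, mem_iInter, mem_compl_iff, hn, true_and]
        rw [h1]
        refine (filt_dist_pt_lt le_rfl x ρ).inter ?_
        refine MeasurableSet.iInter fun m => MeasurableSet.iInter fun _ =>
          MeasurableSet.iInter fun hm => MeasurableSet.compl ?_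
        exact filt_dist_pt_lt hm.le x ρ
      · have h1 : {ω : ℕ → X | 1 ≤ n ∧ dist (ω n) x < ρ ∧
            ∀ m, 1 ≤ m → m < n → ¬ dist (ω m) x < ρ} = ∅ := by
          ext ω; simp [hn]
        rw [h1]
        exact @MeasurableSet.empty _ (Filt n)
  | succ k ih =>
      intro n
      show MeasurableSet[Filt (X := X) n] (⋃ m, ⋃ (_ : m < n), RSet x ρ k m ∩ _)
      refine MeasurableSet.iUnion fun m => MeasurableSet.iUnion fun hm => ?_
      refine MeasurableSet.inter (Filt_mono hm.le _ (ih m)) ?_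
      have h2 : {ω : ℕ → X | dist (ω n) x < ρ ∧ ∀ j, m < j → j < n → ¬ dist (ω j) x < ρ}
          = {ω : ℕ → X | dist (ω n) x < ρ} ∩
            ⋂ (j : ℕ), ⋂ (_ : m < j), ⋂ (_ : j < n), {ω : ℕ → X | dist (ω j) x < ρ}ᶜ := by
        ext ω
        simp only [mem_setOf_eq, mem_inter_iff, mem_iInter, mem_compl_iff]
      rw [h2]
      refine (filt_dist_pt_lt le_rfl x ρ).inter ?_
      refine MeasurableSet.iInter fun j => MeasurableSet.iInter fun hj =>
        MeasurableSet.iInter fun hjn => MeasurableSet.compl ?_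
      exact filt_dist_pt_lt hjn.le x ρ

lemma RSet_meas (k n : ℕ) : MeasurableSet (RSet x ρ k n) :=
  filt_measurableSet (RSet_filt x ρ k n)

lemma RSet_ball : ∀ k n (ω : ℕ → X), ω ∈ RSet x ρ k n → dist (ω n) x < ρ := by
  intro k
  cases k with
  | zero => exact fun n ω hω => hω.2.1
  | succ k =>
      intro n ω hω
      simp only [RSet, mem_iUnion, mem_inter_iff] at hω
      obtain ⟨m, hm, _, h2⟩ := hω
      exact h2.1

lemma RSet_pos : ∀ k n (ω : ℕ → X), ω ∈ RSet x ρ k n → k + 1 ≤ n := by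
  intro k
  induction k with
  | zero => exact fun n ω hω => hω.1
  | succ k ih =>
      intro n ω hω
      simp only [RSet, mem_iUnion, mem_inter_iff] at hω
      obtain ⟨m, hm, h1, _⟩ := hω
      have := ih m ω h1
      omega

lemma RSet_disj : ∀ k, Pairwise (Function.onFun Disjoint fun n => RSet x ρ k n) := by
  intro k
  induction k with
  | zero =>
      intro n n' hne
      wlog h : n < n' generalizing n n'
      · exact (this hne.symm (by omega)).symm
      rw [Function.onFun, disjoint_left]
      rintro ω ⟨h1, h2, h3⟩ ⟨h1', h2', h3'⟩
      exact h3' n h1 h h2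
  | succ k ih =>
      intro n n' hne
      wlog h : n < n' generalizing n n'
      · exact (this hne.symm (by omega)).symm
      rw [Function.onFun, disjoint_left]
      rintro ω hω hω'
      simp only [RSet, mem_iUnion, mem_inter_iff] at hω hω'
      obtain ⟨m, hm, hR, hd, hmin⟩ := hω
      obtain ⟨m', hm', hR', hd', hmin'⟩ := hω'
      have hmm : m = m' := by
        by_contra hne2
        exact Set.disjoint_left.1 (ih hne2) hR hR'
      subst hmm
      exact hmin' n hm h hd

include hmeas hstart hMarkov in
lemma RSet_full (hρ : 0 < ρ)
    (hrec : ∀ G : Set X, IsOpen G → G.Nonempty → ∀ x ∈ G,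
      P x {ω | ∃ n, 1 ≤ n ∧ ω n ∈ G} = 1) :
    ∀ k, P x (⋃ n, RSet x ρ k n) = 1 := by
  classical
  have hDmeas : MeasurableSet {ω : ℕ → X | ∃ j, 1 ≤ j ∧ dist (ω j) x < ρ} := by
    have : {ω : ℕ → X | ∃ j, 1 ≤ j ∧ dist (ω j) x < ρ}
        = ⋃ (j : ℕ), ⋃ (_ : 1 ≤ j), {ω : ℕ → X | dist (ω j) x < ρ} := by
      ext ω; simp
    rw [this]
    refine MeasurableSet.iUnion fun j => MeasurableSet.iUnion fun _ => ?_
    have hc : Measurable fun z : X => dist z x := (continuous_id.dist continuous_const).measurable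
    exact measurableSet_lt (hc.comp (measurable_pi_apply j)) measurable_const
  have hDfull : ∀ y ∈ Metric.ball x ρ, P y {ω : ℕ → X | ∃ j, 1 ≤ j ∧ dist (ω j) x < ρ} = 1 := by
    intro y hy
    have hset : {ω : ℕ → X | ∃ n, 1 ≤ n ∧ ω n ∈ Metric.ball x ρ}
        = {ω : ℕ → X | ∃ j, 1 ≤ j ∧ dist (ω j) x < ρ} := by
      ext ω; simp [Metric.mem_ball]
    rw [← hset]
    exact hrec (Metric.ball x ρ) Metric.isOpen_ball ⟨x, Metric.mem_ball_self hρ⟩ y hy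
  intro k
  induction k with
  | zero =>
      refine le_antisymm prob_le_one ?_
      have hsub : {ω : ℕ → X | ∃ j, 1 ≤ j ∧ dist (ω j) x < ρ} ⊆ ⋃ n, RSet x ρ 0 n := by
        intro ω hω
        have hex : ∃ j, 1 ≤ j ∧ dist (ω j) x < ρ := hω
        set n₀ := Nat.find hex with hn₀
        have hspec := Nat.find_spec hex
        refine mem_iUnion.2 ⟨n₀, hspec.1, hspec.2, fun m h1m hmn => ?_⟩
        intro hd
        exact Nat.find_min hex hmn ⟨h1m, hd⟩
      calc (1 : ℝ≥0∞) = P x {ω : ℕ → X | ∃ j, 1 ≤ j ∧ dist (ω j) x < ρ} := by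
            rw [hDfull x (Metric.mem_ball_self hρ)]
        _ ≤ P x (⋃ n, RSet x ρ 0 n) := measure_mono hsub
  | succ k ih =>
      refine le_antisymm prob_le_one ?_
      have hnull : ∀ m, P x (RSet x ρ k m \ shfn m ⁻¹'
          {ω : ℕ → X | ∃ j, 1 ≤ j ∧ dist (ω j) x < ρ}) = 0 := by
        intro m
        refine escape P hmeas hstart hMarkov m x (RSet_filt x ρ k m)
          (A := Metric.ball x ρ) ?_ hDmeas hDfull
        intro ω hω
        exact RSet_ball x ρ k m ω hω
      have hsub : ∀ m, RSet x ρ k m ∩ shfn m ⁻¹'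
          {ω : ℕ → X | ∃ j, 1 ≤ j ∧ dist (ω j) x < ρ} ⊆ ⋃ n, RSet x ρ (k+1) n := by
        intro m ω hω
        obtain ⟨hR, hD⟩ := hω
        have hex : ∃ j, 1 ≤ j ∧ dist (ω (j + m)) x < ρ := by
          obtain ⟨j, hj1, hjd⟩ := hD
          exact ⟨j, hj1, hjd⟩
        set j₀ := Nat.find hex with hj₀
        have hspec := Nat.find_spec hex
        refine mem_iUnion.2 ⟨j₀ + m, ?_⟩
        show ω ∈ ⋃ m', ⋃ (_ : m' < j₀ + m), RSet x ρ k m' ∩ _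
        refine mem_iUnion.2 ⟨m, mem_iUnion.2 ⟨by omega, hR, hspec.2, fun j hmj hjlt => ?_⟩⟩
        intro hd
        have hj : j - m < j₀ := by omega
        refine Nat.find_min hex hj ⟨by omega, ?_⟩
        have : j - m + m = j := by omega
        rw [this]
        exact hd
      have hdiff : (⋃ m, RSet x ρ k m) \ (⋃ n, RSet x ρ (k+1) n) ⊆
          ⋃ m, (RSet x ρ k m \ shfn m ⁻¹' {ω : ℕ → X | ∃ j, 1 ≤ j ∧ dist (ω j) x < ρ}) := by
        rintro ω ⟨h1, h2⟩
        obtain ⟨m, hm⟩ := mem_iUnion.1 h1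
        refine mem_iUnion.2 ⟨m, hm, fun hD => ?_⟩
        exact h2 (hsub m ⟨hm, hD⟩)
      have hdiffnull : P x ((⋃ m, RSet x ρ k m) \ (⋃ n, RSet x ρ (k+1) n)) = 0 :=
        measure_mono_null hdiff (measure_iUnion_null hnull)
      calc (1 : ℝ≥0∞) = P x (⋃ m, RSet x ρ k m) := ih.symm
        _ ≤ P x (⋃ n, RSet x ρ (k+1) n)
            + P x ((⋃ m, RSet x ρ k m) \ (⋃ n, RSet x ρ (k+1) n)) := by
              refine le_trans (measure_mono ?_) (measure_union_le _ _)
              intro ω hω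
              by_cases h : ω ∈ ⋃ n, RSet x ρ (k+1) n
              · exact Or.inl h
              · exact Or.inr ⟨hω, h⟩
        _ = P x (⋃ n, RSet x ρ (k+1) n) := by rw [hdiffnull, add_zero]

end Recur
section Feller

variable (P : X → Measure (ℕ → X)) [∀ x, IsProbabilityMeasure (P x)]

/-- hits of `G` up to time `k` -/
def EkSet (G : Set X) (k : ℕ) : Set (ℕ → X) := {ω | ∃ n, 1 ≤ n ∧ n ≤ k ∧ ω n ∈ G}

/-- hits of `G` -/
def hitSet (G : Set X) : Set (ℕ → X) := {ω | ∃ n, 1 ≤ n ∧ ω n ∈ G}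

lemma EkSet_meas {G : Set X} (hG : MeasurableSet G) (k : ℕ) : MeasurableSet (EkSet G k) := by
  have : EkSet G k = ⋃ (n : ℕ), ⋃ (_ : 1 ≤ n), ⋃ (_ : n ≤ k),
      (fun ω : ℕ → X => ω n) ⁻¹' G := by
    ext ω; simp only [EkSet, mem_setOf_eq, mem_iUnion, mem_preimage]; tauto
  rw [this]
  exact MeasurableSet.iUnion fun n => MeasurableSet.iUnion fun _ =>
    MeasurableSet.iUnion fun _ => (measurable_pi_apply n) hG

lemma hitSet_meas {G : Set X} (hG : MeasurableSet G) : MeasurableSet (hitSet G) := by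
  have : hitSet G = ⋃ (n : ℕ), ⋃ (_ : 1 ≤ n), (fun ω : ℕ → X => ω n) ⁻¹' G := by
    ext ω; simp [hitSet]
  rw [this]
  exact MeasurableSet.iUnion fun n => MeasurableSet.iUnion fun _ => (measurable_pi_apply n) hG

lemma EkSet_subset_hitSet (G : Set X) (k : ℕ) : EkSet G k ⊆ hitSet G := by
  rintro ω ⟨n, h1, _, hG⟩; exact ⟨n, h1, hG⟩

lemma iUnion_EkSet (G : Set X) : ⋃ k, EkSet G k = hitSet G := by
  ext ω
  simp only [mem_iUnion, EkSet, hitSet, mem_setOf_eq]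
  constructor
  · rintro ⟨k, n, h1, _, hG⟩; exact ⟨n, h1, hG⟩
  · rintro ⟨n, h1, hG⟩; exact ⟨n, n, h1, le_rfl, hG⟩

/-- continuous approximations to the indicator of an open set -/
noncomputable def bApprox (G : Set X) (m : ℕ) : X →ᵇ ℝ :=
  BoundedContinuousFunction.mkOfBound
    ⟨fun y => min 1 ((m : ℝ) * Metric.infDist y Gᶜ),
      continuous_const.min (continuous_const.mul (Metric.continuous_infDist_pt Gᶜ))⟩ 1
    (by
      intro y z
      have h1 : 0 ≤ (m : ℝ) * Metric.infDist y Gᶜ :=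
        mul_nonneg (Nat.cast_nonneg m) Metric.infDist_nonneg
      have h2 : 0 ≤ (m : ℝ) * Metric.infDist z Gᶜ :=
        mul_nonneg (Nat.cast_nonneg m) Metric.infDist_nonneg
      have ay : 0 ≤ min 1 ((m : ℝ) * Metric.infDist y Gᶜ) := le_min one_pos.le h1
      have by' : min 1 ((m : ℝ) * Metric.infDist y Gᶜ) ≤ 1 := min_le_left _ _
      have az : 0 ≤ min 1 ((m : ℝ) * Metric.infDist z Gᶜ) := le_min one_pos.le h2
      have bz : min 1 ((m : ℝ) * Metric.infDist z Gᶜ) ≤ 1 := min_le_left _ _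
      rw [Real.dist_eq, abs_sub_le_iff]
      constructor <;> simp only [ContinuousMap.coe_mk] <;> linarith)

lemma bApprox_apply (G : Set X) (m : ℕ) (y : X) :
    bApprox G m y = min 1 ((m : ℝ) * Metric.infDist y Gᶜ) := rfl

lemma bApprox_nonneg (G : Set X) (m : ℕ) (y : X) : 0 ≤ bApprox G m y :=
  le_min one_pos.le (mul_nonneg (Nat.cast_nonneg m) Metric.infDist_nonneg)

lemma bApprox_mono (G : Set X) {m m' : ℕ} (h : m ≤ m') (y : X) :
    bApprox G m y ≤ bApprox G m' y := by
  rw [bApprox_apply, bApprox_apply]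
  exact min_le_min le_rfl
    (mul_le_mul_of_nonneg_right (Nat.cast_le.2 h) Metric.infDist_nonneg)

lemma bApprox_sup {G : Set X} (hG : IsOpen G) (hGc : Gᶜ.Nonempty) (z : X) :
    ⨆ m, ENNReal.ofReal (bApprox G m z) = G.indicator (fun _ => (1 : ℝ≥0∞)) z := by
  by_cases hz : z ∈ G
  · rw [indicator_of_mem hz]
    refine le_antisymm (iSup_le fun m => ?_) ?_
    · rw [bApprox_apply]
      calc ENNReal.ofReal (min 1 ((m : ℝ) * Metric.infDist z Gᶜ))
          ≤ ENNReal.ofReal 1 := ENNReal.ofReal_le_ofReal (min_le_left _ _)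
        _ = 1 := ENNReal.ofReal_one
    · have hd : 0 < Metric.infDist z Gᶜ :=
        (hG.isClosed_compl.notMem_iff_infDist_pos hGc).1 (by simpa using hz)
      obtain ⟨m, hm⟩ := exists_nat_ge (1 / Metric.infDist z Gᶜ)
      have h1 : (1 : ℝ) ≤ (m : ℝ) * Metric.infDist z Gᶜ := by
        rw [div_le_iff₀ hd] at hm
        linarith
      have : bApprox G m z = 1 := by
        rw [bApprox_apply, min_eq_left h1]
      calc (1 : ℝ≥0∞) = ENNReal.ofReal (bApprox G m z) := by rw [this, ENNReal.ofReal_one]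
        _ ≤ ⨆ m, ENNReal.ofReal (bApprox G m z) := le_iSup (fun m => ENNReal.ofReal (bApprox G m z)) m
  · rw [indicator_of_notMem hz]
    have : ∀ m, bApprox G m z = 0 := by
      intro m
      rw [bApprox_apply, Metric.infDist_zero_of_mem (by simpa using hz)]
      simp
    simp [this]

variable (hFeller : ∀ f : X →ᵇ ℝ, Continuous fun x => ∫ y, f y ∂((P x).map fun ω => ω 1))

/-- transition operator on bounded continuous functions -/
noncomputable def TT (f : X →ᵇ ℝ) : X →ᵇ ℝ :=
  BoundedContinuousFunction.mkOfBound
    ⟨fun y => ∫ z, f z ∂(stepM P y), hFeller f⟩ (2 * ‖f‖)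
    (by
      intro y z
      have key : ∀ w : X, |∫ u, f u ∂(stepM P w)| ≤ ‖f‖ := by
        intro w
        rw [← Real.norm_eq_abs]
        calc ‖∫ u, f u ∂(stepM P w)‖
            ≤ ‖f‖ * ((stepM P w) univ).toReal :=
              norm_integral_le_of_norm_le_const
                (Filter.Eventually.of_forall fun u => f.norm_coe_le_norm u)
          _ = ‖f‖ := by simp
      change dist (∫ u, f u ∂(stepM P y)) (∫ u, f u ∂(stepM P z)) ≤ 2 * ‖f‖
      rw [Real.dist_eq]
      calc |∫ u, f u ∂(stepM P y) - ∫ u, f u ∂(stepM P z)|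
          ≤ |∫ u, f u ∂(stepM P y)| + |∫ u, f u ∂(stepM P z)| := abs_sub _ _
        _ ≤ ‖f‖ + ‖f‖ := add_le_add (key y) (key z)
        _ = 2 * ‖f‖ := by ring)

lemma TT_apply (f : X →ᵇ ℝ) (y : X) : TT P hFeller f y = ∫ z, f z ∂(stepM P y) := rfl

/-- iterated continuous minorants -/
noncomputable def cApprox (G : Set X) : ℕ → ℕ → X →ᵇ ℝ
  | 0, _ => 0
  | (k+1), m => TT P hFeller (bApprox G m ⊔ cApprox G k m)

lemma cApprox_nonneg (G : Set X) : ∀ k m (y : X), 0 ≤ cApprox P hFeller G k m y := by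
  intro k
  induction k with
  | zero => intro m y; simp [cApprox]
  | succ k ih =>
      intro m y
      show 0 ≤ ∫ z, (bApprox G m ⊔ cApprox P hFeller G k m) z ∂(stepM P y)
      refine integral_nonneg fun z => ?_
      simp only [BoundedContinuousFunction.coe_sup, Pi.sup_apply]
      exact le_trans (bApprox_nonneg G m z) le_sup_left

lemma cApprox_mono (G : Set X) : ∀ k, ∀ {m m' : ℕ}, m ≤ m' → ∀ (y : X),
    cApprox P hFeller G k m y ≤ cApprox P hFeller G k m' y := by
  intro k
  induction k with
  | zero => intro m m' h y; simp [cApprox]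
  | succ k ih =>
      intro m m' h y
      show (∫ z, (bApprox G m ⊔ cApprox P hFeller G k m) z ∂(stepM P y))
        ≤ ∫ z, (bApprox G m' ⊔ cApprox P hFeller G k m') z ∂(stepM P y)
      refine integral_mono ((bApprox G m ⊔ cApprox P hFeller G k m).integrable _)
        ((bApprox G m' ⊔ cApprox P hFeller G k m').integrable _) fun z => ?_
      simp only [BoundedContinuousFunction.coe_sup, Pi.sup_apply]
      exact sup_le_sup (bApprox_mono G h z) (ih h z)

end Feller
section Feller2

variable (P : X → Measure (ℕ → X)) [∀ x, IsProbabilityMeasure (P x)]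
variable (hmeas : ∀ B : Set (ℕ → X), MeasurableSet B → Measurable fun x => P x B)
variable (hstart : ∀ x, P x {ω | ω 0 = x} = 1)
variable (hMarkov : ∀ x, ∀ B : Set (ℕ → X), MeasurableSet B →
      P x ((fun ω n => ω (n + 1)) ⁻¹' B) = ∫⁻ y, P y B ∂((P x).map fun ω => ω 1))
variable (hFeller : ∀ f : X →ᵇ ℝ, Continuous fun x => ∫ y, f y ∂((P x).map fun ω => ω 1))

include hmeas hstart hMarkov in
lemma hq_rec {G : Set X} (hG : MeasurableSet G) (k : ℕ) (y : X) :
    P y (EkSet G (k+1)) =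
      ∫⁻ z, max (G.indicator (fun _ => (1 : ℝ≥0∞)) z) (P z (EkSet G k)) ∂(stepM P y) := by
  have hEk := EkSet_meas hG k
  have hsplit : EkSet G (k+1) = (fun ω : ℕ → X => ω 1) ⁻¹' G ∪
      ((fun ω : ℕ → X => ω 1) ⁻¹' Gᶜ ∩ shf ⁻¹' EkSet G k) := by
    ext ω
    simp only [EkSet, mem_setOf_eq, mem_union, mem_inter_iff, mem_preimage, mem_compl_iff]
    constructor
    · rintro ⟨n, h1, hk, hGn⟩
      by_cases h : ω 1 ∈ G
      · exact Or.inl h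
      · have hn1 : n ≠ 1 := fun hn => h (hn ▸ hGn)
        refine Or.inr ⟨h, n - 1, by omega, by omega, ?_⟩
        show ω (n - 1 + 1) ∈ G
        rw [show n - 1 + 1 = n by omega]
        exact hGn
    · rintro (h | ⟨hn, n, h1, hk, hGn⟩)
      · exact ⟨1, le_rfl, by omega, h⟩
      · exact ⟨n + 1, by omega, by omega, hGn⟩
  have hdisj : Disjoint ((fun ω : ℕ → X => ω 1) ⁻¹' G)
      ((fun ω : ℕ → X => ω 1) ⁻¹' Gᶜ ∩ shf ⁻¹' EkSet G k) := by
    rw [disjoint_left]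
    rintro ω h1 ⟨h2, _⟩
    exact h2 h1
  rw [hsplit, measure_union hdisj ((((measurable_pi_apply 1)) hG.compl).inter
    (measurable_shf hEk))]
  have hfirst : P y ((fun ω : ℕ → X => ω 1) ⁻¹' G) = stepM P y G := by
    rw [stepM, Measure.map_apply (measurable_pi_apply 1) hG]
  have hsecond : P y ((fun ω : ℕ → X => ω 1) ⁻¹' Gᶜ ∩ shf ⁻¹' EkSet G k)
      = ∫⁻ z in Gᶜ, P z (EkSet G k) ∂(stepM P y) := by
    have hmas := master P hmeas hstart hMarkov 1 y (EkSet G k) hEk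
      ((fun ω : ℕ → X => ω 1) ⁻¹' Gᶜ) (filt_mem le_rfl hG.compl)
    rw [shfn_one] at hmas
    rw [hmas]
    rw [stepM, setLIntegral_map hG.compl (hmeas _ hEk) (measurable_pi_apply 1)]
  rw [hfirst, hsecond]
  have hmax : ∫⁻ z, max (G.indicator (fun _ => (1 : ℝ≥0∞)) z) (P z (EkSet G k)) ∂(stepM P y)
      = (∫⁻ z in G, max (G.indicator (fun _ => (1 : ℝ≥0∞)) z) (P z (EkSet G k)) ∂(stepM P y))
        + ∫⁻ z in Gᶜ, max (G.indicator (fun _ => (1 : ℝ≥0∞)) z) (P z (EkSet G k))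
            ∂(stepM P y) :=
    (lintegral_add_compl _ hG).symm
  rw [hmax]
  congr 1
  · have : ∀ z ∈ G, max (G.indicator (fun _ => (1 : ℝ≥0∞)) z) (P z (EkSet G k)) = 1 := by
      intro z hz
      rw [indicator_of_mem hz, max_eq_left prob_le_one]
    rw [setLIntegral_congr_fun hG this, setLIntegral_one]
  · refine setLIntegral_congr_fun hG.compl (fun z hz => ?_)
    rw [indicator_of_notMem (by simpa using hz), max_eq_right zero_le]

include hmeas hstart hMarkov in
lemma key_sup {G : Set X} (hGo : IsOpen G) (hGc : Gᶜ.Nonempty) :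
    ∀ k (y : X), (⨆ m, ENNReal.ofReal (cApprox P hFeller G k m y)) = P y (EkSet G k) := by
  have hG := hGo.measurableSet
  intro k
  induction k with
  | zero =>
      intro y
      have h0 : EkSet G 0 = (∅ : Set (ℕ → X)) := by
        ext ω; simp only [EkSet, mem_setOf_eq, mem_empty_iff_false, iff_false]
        rintro ⟨n, h1, h2, _⟩; omega
      rw [h0]
      simp [cApprox]
  | succ k ih =>
      intro y
      rw [hq_rec P hmeas hstart hMarkov hG k y]
      have hpt : ∀ z, max (G.indicator (fun _ => (1 : ℝ≥0∞)) z) (P z (EkSet G k))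
          = ⨆ m, ENNReal.ofReal ((bApprox G m ⊔ cApprox P hFeller G k m) z) := by
        intro z
        have : ∀ m, ENNReal.ofReal ((bApprox G m ⊔ cApprox P hFeller G k m) z)
            = ENNReal.ofReal (bApprox G m z) ⊔ ENNReal.ofReal (cApprox P hFeller G k m z) := by
          intro m
          simp only [BoundedContinuousFunction.coe_sup, Pi.sup_apply]
          exact Monotone.map_sup (fun a b hab => ENNReal.ofReal_le_ofReal hab) _ _
        simp only [this]
        rw [iSup_sup_eq, bApprox_sup hGo hGc z, ih z]
      calc (⨆ m, ENNReal.ofReal (cApprox P hFeller G (k+1) m y))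
          = ⨆ m, ENNReal.ofReal
              (∫ z, (bApprox G m ⊔ cApprox P hFeller G k m) z ∂(stepM P y)) := rfl
        _ = ⨆ m, ∫⁻ z, ENNReal.ofReal ((bApprox G m ⊔ cApprox P hFeller G k m) z)
              ∂(stepM P y) := by
            refine iSup_congr fun m => ?_
            rw [MeasureTheory.ofReal_integral_eq_lintegral_ofReal
              ((bApprox G m ⊔ cApprox P hFeller G k m).integrable _)
              (Filter.Eventually.of_forall fun z => ?_)]
            simp only [BoundedContinuousFunction.coe_sup, Pi.sup_apply]
            exact le_trans (bApprox_nonneg G m z) le_sup_left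
        _ = ∫⁻ z, ⨆ m, ENNReal.ofReal ((bApprox G m ⊔ cApprox P hFeller G k m) z)
              ∂(stepM P y) := by
            rw [lintegral_iSup]
            · intro m
              exact (ENNReal.continuous_ofReal.comp
                (bApprox G m ⊔ cApprox P hFeller G k m).continuous).measurable
            · intro m m' hm
              intro z
              refine ENNReal.ofReal_le_ofReal ?_
              simp only [BoundedContinuousFunction.coe_sup, Pi.sup_apply]
              exact sup_le_sup (bApprox_mono G hm z) (cApprox_mono P hFeller G k hm z)
        _ = ∫⁻ z, max (G.indicator (fun _ => (1 : ℝ≥0∞)) z) (P z (EkSet G k))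
              ∂(stepM P y) := lintegral_congr fun z => (hpt z).symm

include hmeas hstart hMarkov hFeller in
lemma exists_ball (x : X) {G : Set X} (hGo : IsOpen G) (hGc : Gᶜ.Nonempty)
    (hpos : 0 < P x (hitSet G)) :
    ∃ (γ : ℝ≥0∞) (ρ : ℝ), 0 < γ ∧ γ ≠ ∞ ∧ 0 < ρ ∧
      ∀ y, dist y x < ρ → γ ≤ P y (hitSet G) := by
  have hmono : Monotone fun k => EkSet (X := X) G k := by
    rintro a b hab ω ⟨n, h1, h2, h3⟩; exact ⟨n, h1, h2.trans hab, h3⟩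
  have hsup : (⨆ k, P x (EkSet G k)) = P x (hitSet G) := by
    rw [← iUnion_EkSet G]
    exact (Directed.measure_iUnion hmono.directed_le).symm
  rw [← hsup] at hpos
  obtain ⟨k, hk⟩ := lt_iSup_iff.1 hpos
  rw [← key_sup P hmeas hstart hMarkov hFeller hGo hGc k x] at hk
  obtain ⟨m, hm⟩ := lt_iSup_iff.1 hk
  have hc : 0 < cApprox P hFeller G k m x := ENNReal.ofReal_pos.1 hm
  set c := cApprox P hFeller G k m with hcdef
  have hopen : IsOpen {y | c x / 2 < c y} :=
    isOpen_lt continuous_const c.continuous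
  obtain ⟨ρ, hρ0, hball⟩ := Metric.isOpen_iff.1 hopen x (by
    show c x / 2 < c x
    linarith)
  refine ⟨ENNReal.ofReal (c x / 2), ρ, ENNReal.ofReal_pos.2 (by linarith),
    ENNReal.ofReal_ne_top, hρ0, fun y hy => ?_⟩
  have hcy : c x / 2 < c y := hball (Metric.mem_ball.2 hy)
  calc ENNReal.ofReal (c x / 2) ≤ ENNReal.ofReal (c y) := ENNReal.ofReal_le_ofReal hcy.le
    _ ≤ ⨆ m', ENNReal.ofReal (cApprox P hFeller G k m' y) :=
        le_iSup (fun m' => ENNReal.ofReal (cApprox P hFeller G k m' y)) m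
    _ = P y (EkSet G k) := key_sup P hmeas hstart hMarkov hFeller hGo hGc k y
    _ ≤ P y (hitSet G) := measure_mono (EkSet_subset_hitSet G k)

end Feller2

end Stmt10Aux

open Stmt10Aux
open scoped ENNReal

/-- for a topologically irreducible, topologically recurrent,
weak Feller Markov chain, every nonempty open set is hit a.s. from every
starting point. -/
theorem stmt10 {X : Type*} [MetricSpace X] [MeasurableSpace X] [BorelSpace X]
    (P : X → Measure (ℕ → X)) [∀ x, IsProbabilityMeasure (P x)]
    (hmeas : ∀ B : Set (ℕ → X), MeasurableSet B → Measurable fun x => P x B)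
    (hstart : ∀ x, P x {ω | ω 0 = x} = 1)
    (hMarkov : ∀ x, ∀ B : Set (ℕ → X), MeasurableSet B →
      P x ((fun ω n => ω (n + 1)) ⁻¹' B) = ∫⁻ y, P y B ∂((P x).map fun ω => ω 1))
    (hFeller : ∀ f : X →ᵇ ℝ, Continuous fun x => ∫ y, f y ∂((P x).map fun ω => ω 1))
    (hirr : ∀ x : X, ∀ G : Set X, IsOpen G → G.Nonempty →
      0 < P x {ω | ∃ n, 1 ≤ n ∧ ω n ∈ G})
    (hrec : ∀ G : Set X, IsOpen G → G.Nonempty → ∀ x ∈ G,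
      P x {ω | ∃ n, 1 ≤ n ∧ ω n ∈ G} = 1) :
    ∀ x : X, ∀ G : Set X, IsOpen G → G.Nonempty →
      P x {ω | ∃ n, 1 ≤ n ∧ ω n ∈ G} = 1 := by
  classical
  intro x G hGo hGne
  by_cases hGc : (Gᶜ : Set X).Nonempty
  · -- main case
    have hG := hGo.measurableSet
    have hEmeas : MeasurableSet (hitSet G) := hitSet_meas hG
    have hNmeas : MeasurableSet (hitSet G)ᶜ := hEmeas.compl
    have hpos : 0 < P x (hitSet G) := hirr x G hGo hGne
    obtain ⟨γ, ρ, hγ0, hγtop, hρ0, hball⟩ :=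
      exists_ball P hmeas hstart hMarkov hFeller x hGo hGc hpos
    set N := (hitSet G)ᶜ with hNdef
    have hNmem : ∀ ω : ℕ → X, ω ∈ N ↔ ∀ j, 1 ≤ j → ω j ∉ G := by
      intro ω
      simp only [hNdef, hitSet, mem_compl_iff, mem_setOf_eq, not_exists, not_and]
    set noG : ℕ → Set (ℕ → X) := fun n => {ω | ∀ j, 1 ≤ j → j ≤ n → ω j ∉ G} with hnoG
    have hnoGfilt : ∀ n, MeasurableSet[Filt n] (noG n) := by
      intro n
      have h1 : noG n = ⋂ (j : ℕ), ⋂ (_ : 1 ≤ j), ⋂ (_ : j ≤ n),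
          {ω : ℕ → X | ω j ∈ Gᶜ} := by
        ext ω; simp [hnoG]
      rw [h1]
      exact MeasurableSet.iInter fun j => MeasurableSet.iInter fun _ =>
        MeasurableSet.iInter fun hj => filt_mem hj hG.compl
    set SS : ℕ → Set (ℕ → X) := fun k => ⋃ n, RSet x ρ k n ∩ noG n with hSS
    have hSSmeas : ∀ k, MeasurableSet (SS k) := fun k =>
      MeasurableSet.iUnion fun n =>
        (RSet_meas x ρ k n).inter (filt_measurableSet (hnoGfilt n))
    -- single-term estimate
    have hterm : ∀ k n, P x (N ∩ RSet x ρ k n) ≤ (1 - γ) * P x (RSet x ρ k n ∩ noG n) := by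
      intro k n
      have hsub : N ∩ RSet x ρ k n ⊆ (RSet x ρ k n ∩ noG n) ∩ shfn n ⁻¹' N := by
        rintro ω ⟨hωN, hωR⟩
        refine ⟨⟨hωR, fun j hj1 _ => (hNmem ω).1 hωN j hj1⟩, ?_⟩
        show shfn n ω ∈ N
        rw [hNmem]
        intro j hj1
        exact (hNmem ω).1 hωN (j + n) (by omega)
      calc P x (N ∩ RSet x ρ k n)
          ≤ P x ((RSet x ρ k n ∩ noG n) ∩ shfn n ⁻¹' N) := measure_mono hsub
        _ = ∫⁻ ω in RSet x ρ k n ∩ noG n, P (ω n) N ∂(P x) :=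
            master P hmeas hstart hMarkov n x N hNmeas _
              ((RSet_filt x ρ k n).inter (hnoGfilt n))
        _ ≤ ∫⁻ _ in RSet x ρ k n ∩ noG n, (1 - γ) ∂(P x) := by
            refine setLIntegral_mono measurable_const fun ω hω => ?_
            have hb : dist (ω n) x < ρ := RSet_ball x ρ k n ω hω.1
            have h1 : γ ≤ P (ω n) (hitSet G) := hball _ hb
            have h2 : P (ω n) N = 1 - P (ω n) (hitSet G) := prob_compl_eq_one_sub hEmeas
            rw [h2]
            exact tsub_le_tsub_left h1 1
        _ = (1 - γ) * P x (RSet x ρ k n ∩ noG n) := setLIntegral_const _ _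
    -- summing
    have hdisj2 : ∀ k, Pairwise (Function.onFun Disjoint fun n => RSet x ρ k n ∩ noG n) :=
      fun k i j hij => ((RSet_disj x ρ k) hij).mono inter_subset_left inter_subset_left
    have hsum : ∀ k, P x N ≤ (1 - γ) * P x (SS k) := by
      intro k
      have hfull := RSet_full P hmeas hstart hMarkov x ρ hρ0 hrec k
      have hcov : P x N = P x (N ∩ ⋃ n, RSet x ρ k n) := by
        have h2 := measure_inter_add_diff (μ := P x) N
          (MeasurableSet.iUnion fun n => RSet_meas x ρ k n)
        have h3 : P x (N \ ⋃ n, RSet x ρ k n) = 0 := by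
          refine measure_mono_null (diff_subset_compl _ _) ?_
          exact (prob_compl_eq_zero_iff
            (MeasurableSet.iUnion fun n => RSet_meas x ρ k n)).2 hfull
        rw [h3, add_zero] at h2
        exact h2.symm
      have hcov2 : P x (N ∩ ⋃ n, RSet x ρ k n) = ∑' n, P x (N ∩ RSet x ρ k n) := by
        rw [inter_iUnion]
        exact measure_iUnion
          (fun i j hij => ((RSet_disj x ρ k) hij).mono inter_subset_right inter_subset_right)
          (fun n => hNmeas.inter (RSet_meas x ρ k n))
      rw [hcov, hcov2]
      calc (∑' n, P x (N ∩ RSet x ρ k n))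
          ≤ ∑' n, (1 - γ) * P x (RSet x ρ k n ∩ noG n) :=
            ENNReal.tsum_le_tsum fun n => hterm k n
        _ = (1 - γ) * ∑' n, P x (RSet x ρ k n ∩ noG n) := ENNReal.tsum_mul_left
        _ = (1 - γ) * P x (SS k) := by
            rw [← measure_iUnion (hdisj2 k)
              (fun n => (RSet_meas x ρ k n).inter (filt_measurableSet (hnoGfilt n)))]
    -- antitone
    have hanti : Antitone SS := by
      refine antitone_nat_of_succ_le fun k => ?_
      rintro ω hω
      obtain ⟨n, hn⟩ := mem_iUnion.1 hω
      obtain ⟨hR, hnoGn⟩ := hn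
      simp only [RSet, mem_iUnion, mem_inter_iff] at hR
      obtain ⟨m, hmn, hRm, _⟩ := hR
      exact mem_iUnion.2 ⟨m, hRm, fun j hj1 hjm => hnoGn j hj1 (by omega)⟩
    have hintN : ⋂ k, SS k ⊆ N := by
      intro ω hω
      rw [hNmem]
      intro j hj1 hjG
      have hωj := mem_iInter.1 hω j
      obtain ⟨n, hn⟩ := mem_iUnion.1 hωj
      obtain ⟨hR, hnoGn⟩ := hn
      have hpos' := RSet_pos x ρ j n ω hR
      exact hnoGn j hj1 (by omega) hjG
    -- limit
    have htend : Filter.Tendsto (fun k => P x (SS k)) Filter.atTop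
        (nhds (P x (⋂ k, SS k))) :=
      tendsto_measure_iInter_atTop (fun k => (hSSmeas k).nullMeasurableSet) hanti
        ⟨0, measure_ne_top _ _⟩
    have htop : (1 : ℝ≥0∞) - γ ≠ ∞ := by
      exact ne_top_of_le_ne_top ENNReal.one_ne_top tsub_le_self
    have htend2 : Filter.Tendsto (fun k => (1 - γ) * P x (SS k)) Filter.atTop
        (nhds ((1 - γ) * P x (⋂ k, SS k))) :=
      ENNReal.Tendsto.const_mul htend (Or.inr htop)
    have hle : P x N ≤ (1 - γ) * P x (⋂ k, SS k) :=
      ge_of_tendsto htend2 (Filter.Eventually.of_forall hsum)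
    have hfinal : P x N ≤ (1 - γ) * P x N :=
      hle.trans (mul_le_mul_right (measure_mono hintN) _)
    have hzero : P x N = 0 := by
      by_contra h0
      have hlt : (1 : ℝ≥0∞) - γ < 1 :=
        ENNReal.sub_lt_self ENNReal.one_ne_top one_ne_zero (ne_of_gt hγ0)
      have hm : (1 - γ) * P x N < 1 * P x N :=
        ENNReal.mul_lt_mul_left h0 (measure_ne_top _ _) hlt
      rw [one_mul] at hm
      exact absurd (lt_of_le_of_lt hfinal hm) (lt_irrefl _)
    show P x (hitSet G) = 1
    rw [← compl_compl (hitSet G)]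
    exact (prob_compl_eq_one_iff hNmeas).2 hzero
  · -- trivial case : G = univ
    have hGuniv : G = univ := by
      rw [← compl_empty_iff]
      exact not_nonempty_iff_eq_empty.1 hGc
    have huniv : {ω : ℕ → X | ∃ n, 1 ≤ n ∧ ω n ∈ G} = univ :=
      eq_univ_of_forall fun ω => ⟨1, le_rfl, by rw [hGuniv]; trivial⟩
    rw [huniv]
    exact measure_univ
end

section
/- Let S be a random walk on ℝ^d with i.i.d. increments such that, started at 0, the ladder walk H (defined by H_0 = 0 and H_n = S_{τ_n} where τ_n is the first time all coordinates strictly exceed those of H_{n−1}) is well-defined with a.s. finite steps. Then for every x ∈ ℝ^d, the hitting time of the shifted open orthant x + (0,∞)^d by S is a.s. finite: P_0(∃ n ≥ 1, S_n ∈ x + (0,∞)^d) = 1, given P_0(τ_{(0,∞)^d} < ∞) = 1. -/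
open MeasureTheory ProbabilityTheory
open scoped ENNReal

set_option linter.unusedSectionVars false
set_option maxHeartbeats 1000000

namespace Stmt17

variable {Ω : Type*} {d : ℕ}

/-- Partial sums of the increments, starting from index `m`. -/
noncomputable def W (X : ℕ → Ω → (Fin d → ℝ)) (m k : ℕ) (ω : Ω) : Fin d → ℝ :=
  ∑ j ∈ Finset.range k, X (m + j) ω

/-- The event that the walk of increments `X m, X (m+1), ...` eventually exceeds
level `t` in every coordinate. -/
def A (X : ℕ → Ω → (Fin d → ℝ)) (m : ℕ) (t : ℝ) : Set Ω :=
  {ω | ∃ k, 1 ≤ k ∧ ∀ i, t < W X m k ω i}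

/-- Truncated version of `A`. -/
def B (X : ℕ → Ω → (Fin d → ℝ)) (m : ℕ) (t : ℝ) (K : ℕ) : Set Ω :=
  {ω | ∃ k, 1 ≤ k ∧ k ≤ K ∧ ∀ i, t < W X m k ω i}

/-- The walk (from time 0) is in the positive orthant at time `m`. -/
def G (X : ℕ → Ω → (Fin d → ℝ)) (m : ℕ) : Set Ω :=
  {ω | ∀ i, 0 < W X 0 m ω i}

/-- `m` is the first time (at least 1) the walk is in the positive orthant. -/
def E (X : ℕ → Ω → (Fin d → ℝ)) (m : ℕ) : Set Ω :=
  G X m ∩ ⋂ k ∈ Set.Ico 1 m, (G X k)ᶜ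

/-- All coordinates at time `m` are at least `η`. -/
def H (X : ℕ → Ω → (Fin d → ℝ)) (m : ℕ) (η : ℝ) : Set Ω :=
  {ω | ∀ i, η ≤ W X 0 m ω i}

lemma W_add (X : ℕ → Ω → (Fin d → ℝ)) (m k : ℕ) (ω : Ω) :
    W X 0 (m + k) ω = W X 0 m ω + W X m k ω := by
  simp only [W, Nat.zero_add]
  exact Finset.sum_range_add (fun j => X j ω) m k

lemma G_zero (hd : 1 ≤ d) (X : ℕ → Ω → (Fin d → ℝ)) : G X 0 = ∅ := by
  ext ω
  simp only [G, Set.mem_setOf_eq, Set.mem_empty_iff_false, iff_false, not_forall]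
  refine ⟨⟨0, hd⟩, ?_⟩
  simp [W]

lemma E_one_le (hd : 1 ≤ d) {X : ℕ → Ω → (Fin d → ℝ)} {m : ℕ} {ω : Ω}
    (hω : ω ∈ E X m) : 1 ≤ m := by
  by_contra h
  push_neg at h
  interval_cases m
  have := hω.1
  rw [G_zero hd] at this
  exact this

lemma E_disjoint (hd : 1 ≤ d) (X : ℕ → Ω → (Fin d → ℝ)) :
    Pairwise (Function.onFun Disjoint (E X)) := by
  have key : ∀ m n, m < n → Disjoint (E X m) (E X n) := by
    intro m n hmn
    rw [Set.disjoint_left]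
    intro ω hm hn
    have h1m : 1 ≤ m := E_one_le hd hm
    have := Set.mem_iInter₂.mp hn.2 m ⟨h1m, hmn⟩
    exact this hm.1
  intro m n hmn
  rcases lt_or_gt_of_ne hmn with h | h
  · exact key m n h
  · exact (key n m h).symm

lemma E_union (hd : 1 ≤ d) (X : ℕ → Ω → (Fin d → ℝ)) :
    (⋃ m, E X m) = A X 0 0 := by
  ext ω
  simp only [Set.mem_iUnion]
  constructor
  · rintro ⟨m, hm⟩
    exact ⟨m, E_one_le hd hm, hm.1⟩
  · rintro hA
    classical
    have hex : ∃ n, 1 ≤ n ∧ ∀ i, 0 < W X 0 n ω i := hA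
    refine ⟨Nat.find hex, (Nat.find_spec hex).2, ?_⟩
    rw [Set.mem_iInter₂]
    intro k hk
    intro hGk
    exact Nat.find_min hex hk.2 ⟨hk.1, hGk⟩

variable [MeasurableSpace Ω] {X : ℕ → Ω → (Fin d → ℝ)}
  {P : Measure Ω} [IsProbabilityMeasure P]

lemma measurable_W {m' : MeasurableSpace Ω} {m : ℕ}
    (h : ∀ j, Measurable[m'] (X (m + j))) (k : ℕ) :
    Measurable[m'] (W X m k) := by
  apply Finset.measurable_sum
  intro j _
  exact h j

lemma measurable_W0 {m' : MeasurableSpace Ω} {mm : ℕ}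
    (h : ∀ i, i < mm → Measurable[m'] (X i)) {k : ℕ} (hk : k ≤ mm) :
    Measurable[m'] (W X 0 k) := by
  apply Finset.measurable_sum
  intro j hj
  exact h (0 + j) (by simpa using lt_of_lt_of_le (Finset.mem_range.mp hj) hk)

lemma measurableSet_exceed {m' : MeasurableSpace Ω} {f : Ω → Fin d → ℝ}
    (hf : Measurable[m'] f) (t : ℝ) : MeasurableSet[m'] {ω | ∀ i, t < f ω i} := by
  have : {ω | ∀ i, t < f ω i} = ⋂ i, (fun ω => f ω i) ⁻¹' Set.Ioi t := by
    ext ω; simp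
  rw [this]
  exact MeasurableSet.iInter fun i =>
    ((measurable_pi_apply i).comp hf) measurableSet_Ioi

lemma measurableSet_exceed_le {m' : MeasurableSpace Ω} {f : Ω → Fin d → ℝ}
    (hf : Measurable[m'] f) (t : ℝ) : MeasurableSet[m'] {ω | ∀ i, t ≤ f ω i} := by
  have : {ω | ∀ i, t ≤ f ω i} = ⋂ i, (fun ω => f ω i) ⁻¹' Set.Ici t := by
    ext ω; simp
  rw [this]
  exact MeasurableSet.iInter fun i =>
    ((measurable_pi_apply i).comp hf) measurableSet_Ici

lemma measurableSet_A {m' : MeasurableSpace Ω} {m : ℕ}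
    (h : ∀ j, Measurable[m'] (X (m + j))) (t : ℝ) :
    MeasurableSet[m'] (A X m t) := by
  have : A X m t = ⋃ k, ⋃ _ : 1 ≤ k, {ω | ∀ i, t < W X m k ω i} := by
    ext ω; simp [A]
  rw [this]
  exact .iUnion fun k => .iUnion fun _ => measurableSet_exceed (measurable_W h k) t

lemma measurableSet_B {m' : MeasurableSpace Ω} {m : ℕ}
    (h : ∀ j, Measurable[m'] (X (m + j))) (t : ℝ) (K : ℕ) :
    MeasurableSet[m'] (B X m t K) := by
  have : B X m t K = ⋃ k, ⋃ _ : 1 ≤ k ∧ k ≤ K, {ω | ∀ i, t < W X m k ω i} := by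
    ext ω; simp [B]; tauto
  rw [this]
  exact .iUnion fun k => .iUnion fun _ => measurableSet_exceed (measurable_W h k) t

lemma measurableSet_G {m' : MeasurableSpace Ω} {mm : ℕ}
    (h : ∀ i, i < mm → Measurable[m'] (X i)) {k : ℕ} (hk : k ≤ mm) :
    MeasurableSet[m'] (G X k) :=
  measurableSet_exceed (measurable_W0 h hk) 0

lemma measurableSet_E {m' : MeasurableSpace Ω} {mm : ℕ}
    (h : ∀ i, i < mm → Measurable[m'] (X i)) {m : ℕ} (hm : m ≤ mm) :
    MeasurableSet[m'] (E X m) := by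
  refine (measurableSet_G h hm).inter ?_
  refine MeasurableSet.biInter (Set.to_countable _) fun k hk => ?_
  exact (measurableSet_G h (le_trans (le_of_lt hk.2) hm)).compl

lemma measurableSet_H {m' : MeasurableSpace Ω} {mm : ℕ}
    (h : ∀ i, i < mm → Measurable[m'] (X i)) {m : ℕ} (hm : m ≤ mm) (η : ℝ) :
    MeasurableSet[m'] (H X m η) :=
  measurableSet_exceed_le (measurable_W0 h hm) η

/-- The joint law of any block of `K` increments is the product law. -/
lemma pi_law (hmeas : ∀ i, Measurable (X i))
    (hindep : iIndepFun X P)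
    (hident : ∀ i, P.map (X i) = P.map (X 0)) (m K : ℕ) :
    P.map (fun ω (j : Fin K) => X (m + (j : ℕ)) ω)
      = Measure.pi (fun _ : Fin K => P.map (X 0)) := by
  have hT : Measurable (fun ω (j : Fin K) => X (m + (j : ℕ)) ω) :=
    measurable_pi_lambda _ fun j => hmeas _
  refine (Measure.pi_eq fun s hs => ?_).symm
  rw [Measure.map_apply hT (MeasurableSet.univ_pi hs)]
  classical
  set sets : ℕ → Set (Fin d → ℝ) :=
    fun i => ⋂ (j : Fin K) (_ : m + (j : ℕ) = i), s j with hsets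
  let e : Fin K ↪ ℕ :=
    ⟨fun j => m + (j : ℕ), by intro a b hab; exact Fin.ext (Nat.add_left_cancel hab)⟩
  have he : ∀ j : Fin K, e j = m + (j : ℕ) := fun _ => rfl
  have hmemset : ∀ i, MeasurableSet (sets i) := fun i =>
    MeasurableSet.iInter fun j => MeasurableSet.iInter fun _ => hs j
  have h1 := hindep.measure_inter_preimage_eq_mul (S := Finset.univ.map e)
    (sets := sets) (fun i _ => hmemset i)
  have hsete : ∀ j : Fin K, sets (m + (j : ℕ)) = s j := by
    intro j
    ext y
    simp only [hsets, Set.mem_iInter]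
    constructor
    · intro h; exact h j rfl
    · intro hy j' hj'
      have : j' = j := Fin.ext (Nat.add_left_cancel hj')
      rwa [this]
  have h2 : ((fun ω (j : Fin K) => X (m + (j : ℕ)) ω) ⁻¹' Set.univ.pi s)
      = ⋂ i ∈ Finset.univ.map e, X i ⁻¹' sets i := by
    ext ω
    simp only [Set.mem_preimage, Set.mem_pi, Set.mem_univ, forall_true_left,
      Set.mem_iInter, Finset.mem_map, Finset.mem_univ, true_and, hsets,
      Set.mem_preimage]
    constructor
    · rintro h i ⟨j0, _, rfl⟩ j' hj'
      rw [he j0] at hj'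
      have : j' = j0 := Fin.ext (Nat.add_left_cancel hj')
      subst this
      rw [he]
      exact h j'
    · intro h j
      exact h (m + (j : ℕ)) ⟨j, rfl⟩ j rfl
  rw [h2, h1, Finset.prod_map]
  refine Finset.prod_congr rfl fun j _ => ?_
  rw [he j, hsete j, ← Measure.map_apply (hmeas _) (hs j), hident (m + (j : ℕ))]

lemma meas_B_eq (hmeas : ∀ i, Measurable (X i))
    (hindep : iIndepFun X P)
    (hident : ∀ i, P.map (X i) = P.map (X 0)) (m : ℕ) (t : ℝ) (K : ℕ) :
    P (B X m t K) = P (B X 0 t K) := by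
  classical
  set C : Set (Fin K → Fin d → ℝ) :=
    {y | ∃ k, 1 ≤ k ∧ k ≤ K ∧ ∀ i, t < ∑ j ∈ Finset.range k,
        (if h : j < K then y ⟨j, h⟩ i else 0)} with hC
  have hCm : MeasurableSet C := by
    have : C = ⋃ k, ⋃ _ : 1 ≤ k ∧ k ≤ K,
        ⋂ i, {y : Fin K → Fin d → ℝ |
          t < ∑ j ∈ Finset.range k, (if h : j < K then y ⟨j, h⟩ i else 0)} := by
      ext y; simp only [hC, Set.mem_setOf_eq, Set.mem_iUnion, Set.mem_iInter]; tauto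
    rw [this]
    refine .iUnion fun k => .iUnion fun _ => .iInter fun i => ?_
    have hg : Measurable fun y : Fin K → Fin d → ℝ =>
        ∑ j ∈ Finset.range k, (if h : j < K then y ⟨j, h⟩ i else 0) := by
      apply Finset.measurable_sum
      intro j _
      by_cases h : j < K
      · simp only [dif_pos h]
        exact (measurable_pi_apply i).comp (measurable_pi_apply (⟨j, h⟩ : Fin K))
      · simp only [dif_neg h]; exact measurable_const
    exact measurableSet_lt measurable_const hg
  have key : ∀ m', B X m' t K = (fun ω (j : Fin K) => X (m' + (j : ℕ)) ω) ⁻¹' C := by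
    intro m'
    ext ω
    have hsum : ∀ k, k ≤ K → ∀ i,
        (∑ j ∈ Finset.range k, if h : j < K then X (m' + (⟨j, h⟩ : Fin K)) ω i else 0)
          = W X m' k ω i := by
      intro k hk i
      rw [W, Finset.sum_apply]
      refine Finset.sum_congr rfl fun j hj => ?_
      rw [dif_pos (lt_of_lt_of_le (Finset.mem_range.mp hj) hk)]
    simp only [B, Set.mem_setOf_eq, Set.mem_preimage, hC]
    constructor
    · rintro ⟨k, hk1, hkK, h⟩
      exact ⟨k, hk1, hkK, fun i => by rw [hsum k hkK i]; exact h i⟩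
    · rintro ⟨k, hk1, hkK, h⟩
      refine ⟨k, hk1, hkK, fun i => ?_⟩
      rw [← hsum k hkK i]; exact h i
  have hT : ∀ m', Measurable (fun ω (j : Fin K) => X (m' + (j : ℕ)) ω) :=
    fun m' => measurable_pi_lambda _ fun j => hmeas _
  rw [key m, key 0, ← Measure.map_apply (hT m) hCm, ← Measure.map_apply (hT 0) hCm,
    pi_law hmeas hindep hident m K, pi_law hmeas hindep hident 0 K]

lemma meas_A_eq (hmeas : ∀ i, Measurable (X i))
    (hindep : iIndepFun X P)
    (hident : ∀ i, P.map (X i) = P.map (X 0)) (m : ℕ) (t : ℝ) :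
    P (A X m t) = P (A X 0 t) := by
  have hu : ∀ m', A X m' t = ⋃ K, B X m' t K := by
    intro m'; ext ω
    simp only [A, B, Set.mem_setOf_eq, Set.mem_iUnion]
    constructor
    · rintro ⟨k, hk, h⟩; exact ⟨k, k, hk, le_rfl, h⟩
    · rintro ⟨K, k, hk, _, h⟩; exact ⟨k, hk, h⟩
  have hmono : ∀ m', Monotone (fun K => B X m' t K) := by
    intro m' K K' hKK' ω h
    obtain ⟨k, hk, hkK, h⟩ := h
    exact ⟨k, hk, hkK.trans hKK', h⟩
  rw [hu m, hu 0, Directed.measure_iUnion (hmono m).directed_le,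
    Directed.measure_iUnion (hmono 0).directed_le]
  exact iSup_congr fun K => meas_B_eq hmeas hindep hident m t K

lemma measurable_X_past (m : ℕ) {i : ℕ} (hi : i < m) :
    Measurable[⨆ i ∈ Set.Iio m, MeasurableSpace.comap (X i) inferInstance] (X i) := by
  rw [measurable_iff_comap_le]
  exact le_iSup₂ (f := fun i (_ : i ∈ Set.Iio m) =>
    MeasurableSpace.comap (X i) inferInstance) i hi

lemma indep_past (hmeas : ∀ i, Measurable (X i))
    (hindep : iIndepFun X P) (m : ℕ) {Bs : Set Ω}
    (hB : MeasurableSet[⨆ i ∈ Set.Iio m, MeasurableSpace.comap (X i) inferInstance] Bs)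
    (t : ℝ) :
    P (Bs ∩ A X m t) = P Bs * P (A X m t) := by
  have hind : Indep (⨆ i ∈ Set.Iio m, MeasurableSpace.comap (X i) inferInstance)
      (⨆ i ∈ Set.Ici m, MeasurableSpace.comap (X i) inferInstance) P :=
    indep_iSup_of_disjoint (fun i => (hmeas i).comap_le)
      ((iIndepFun_iff_iIndep _ _ _).mp hindep) (Set.Iio_disjoint_Ici le_rfl)
  have hXf : ∀ j, Measurable[⨆ i ∈ Set.Ici m,
      MeasurableSpace.comap (X i) inferInstance] (X (m + j)) := by
    intro j
    rw [measurable_iff_comap_le]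
    exact le_iSup₂ (f := fun i (_ : i ∈ Set.Ici m) =>
      MeasurableSpace.comap (X i) inferInstance) (m + j) (Nat.le_add_right m j)
  exact (Indep_iff _ _ _).mp hind Bs (A X m t) hB (measurableSet_A hXf t)

end Stmt17

/-- for a random walk in `ℝ^d` with i.i.d. increments started at `0`
that a.s. hits the open positive orthant, every shifted open orthant
`x + (0,∞)^d` is hit a.s. -/
theorem stmt17 {Ω : Type*} [MeasurableSpace Ω] (P : Measure Ω) [IsProbabilityMeasure P]
    {d : ℕ} (hd : 1 ≤ d)
    (X : ℕ → Ω → (Fin d → ℝ)) (hmeas : ∀ i, Measurable (X i))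
    (hindep : iIndepFun X P)
    (hident : ∀ i, P.map (X i) = P.map (X 0))
    (S : ℕ → Ω → (Fin d → ℝ)) (hS : ∀ n ω, S n ω = ∑ i ∈ Finset.range n, X i ω)
    (hhit : P {ω | ∃ n, 1 ≤ n ∧ ∀ i, 0 < S n ω i} = 1) :
    ∀ x : Fin d → ℝ, P {ω | ∃ n, 1 ≤ n ∧ ∀ i, x i < S n ω i} = 1 := by
  intro x
  have hSW : ∀ n ω, S n ω = Stmt17.W X 0 n ω := by
    intro n ω
    rw [hS]
    unfold Stmt17.W
    simp only [Nat.zero_add]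
  have hA0 : ∀ t : ℝ, {ω | ∃ n, 1 ≤ n ∧ ∀ i, t < S n ω i} = Stmt17.A X 0 t := by
    intro t; ext ω
    simp only [Set.mem_setOf_eq, Stmt17.A, hSW]
  rw [hA0 0] at hhit
  -- measurability facts
  have hAmeas : ∀ m t, MeasurableSet (Stmt17.A X m t) := fun m t =>
    Stmt17.measurableSet_A (fun j => hmeas _) t
  have hEmeas : ∀ m, MeasurableSet (Stmt17.E X m) := fun m =>
    Stmt17.measurableSet_E (mm := m) (fun i _ => hmeas i) le_rfl
  have hHmeas : ∀ m η, MeasurableSet (Stmt17.H X m η) := fun m η =>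
    Stmt17.measurableSet_H (mm := m) (fun i _ => hmeas i) le_rfl η
  have hEdisj := Stmt17.E_disjoint hd X
  have hhit1 : P (⋃ m, Stmt17.E X m) = 1 := by
    rw [Stmt17.E_union hd X]; exact hhit
  -- main claim : every scalar level is a.s. exceeded
  have key : ∀ t : ℝ, P (Stmt17.A X 0 t) = 1 := by
    -- choose η with positive probability of first-hit landing deep
    obtain ⟨j0, hq0⟩ : ∃ j : ℕ,
        P (⋃ m, Stmt17.E X m ∩ Stmt17.H X m (1 / ((j : ℝ) + 1))) ≠ 0 := by
      by_contra hc
      push_neg at hc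
      have hnull : P (⋃ j : ℕ, ⋃ m,
          Stmt17.E X m ∩ Stmt17.H X m (1 / ((j : ℝ) + 1))) = 0 :=
        measure_iUnion_null hc
      have hcover : (⋃ m, Stmt17.E X m) ⊆ ⋃ j : ℕ, ⋃ m,
          Stmt17.E X m ∩ Stmt17.H X m (1 / ((j : ℝ) + 1)) := by
        intro ω hω
        obtain ⟨m, hm⟩ := Set.mem_iUnion.mp hω
        have hpos : ∀ i, 0 < Stmt17.W X 0 m ω i := hm.1
        obtain ⟨ε, hεpos, hεle⟩ : ∃ ε > 0, ∀ i, ε ≤ Stmt17.W X 0 m ω i := by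
          have hne : (Finset.univ : Finset (Fin d)).Nonempty :=
            ⟨⟨0, hd⟩, Finset.mem_univ _⟩
          refine ⟨Finset.univ.inf' hne (fun i => Stmt17.W X 0 m ω i), ?_, ?_⟩
          · exact (Finset.lt_inf'_iff hne).mpr fun i _ => hpos i
          · exact fun i => Finset.inf'_le _ (Finset.mem_univ i)
        obtain ⟨j, hj⟩ := exists_nat_one_div_lt hεpos
        exact Set.mem_iUnion.mpr ⟨j, Set.mem_iUnion.mpr
          ⟨m, hm, fun i => (hj.le.trans (hεle i))⟩⟩
      have : (1 : ℝ≥0∞) ≤ 0 := by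
        calc (1 : ℝ≥0∞) = P (⋃ m, Stmt17.E X m) := hhit1.symm
        _ ≤ P (⋃ j : ℕ, ⋃ m, Stmt17.E X m ∩ Stmt17.H X m (1 / ((j : ℝ) + 1))) :=
            measure_mono hcover
        _ = 0 := hnull
      simp at this
    set η : ℝ := 1 / ((j0 : ℝ) + 1) with hηdef
    have hηpos : 0 < η := by positivity
    set q := ∑' m, P (Stmt17.E X m ∩ Stmt17.H X m η) with hqdef
    set s := ∑' m, P (Stmt17.E X m \ Stmt17.H X m η) with hsdef
    have hEH_disj : Pairwise (Function.onFun Disjoint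
        (fun m => Stmt17.E X m ∩ Stmt17.H X m η)) :=
      fun m n hmn => (hEdisj hmn).mono Set.inter_subset_left Set.inter_subset_left
    have hqR : q = P (⋃ m, Stmt17.E X m ∩ Stmt17.H X m η) :=
      (measure_iUnion hEH_disj (fun m => (hEmeas m).inter (hHmeas m η))).symm
    have hqne : q ≠ 0 := by rw [hqR]; exact hq0
    have hqs : q + s = 1 := by
      rw [hqdef, hsdef, ← ENNReal.tsum_add]
      have hc : ∀ m : ℕ, P (Stmt17.E X m ∩ Stmt17.H X m η)
          + P (Stmt17.E X m \ Stmt17.H X m η) = P (Stmt17.E X m) :=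
        fun m => measure_inter_add_diff _ (hHmeas m η)
      rw [tsum_congr hc, ← measure_iUnion hEdisj hEmeas]
      exact hhit1
    have hqfin : q ≠ ⊤ := by
      intro h; rw [h] at hqs; simp at hqs
    have hsfin : s ≠ ⊤ := by
      intro h; rw [h] at hqs; simp at hqs
    -- the inductive step
    have step : ∀ t : ℝ, P (Stmt17.A X 0 (t - η)) = 1 → P (Stmt17.A X 0 t) = 1 := by
      intro t hprev
      -- past measurability
      have hpastEH : ∀ m, MeasurableSet[⨆ i ∈ Set.Iio m,
          MeasurableSpace.comap (X i) inferInstance]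
          (Stmt17.E X m ∩ Stmt17.H X m η) := fun m =>
        (Stmt17.measurableSet_E (mm := m)
            (fun i hi => Stmt17.measurable_X_past m hi) le_rfl).inter
          (Stmt17.measurableSet_H (mm := m)
            (fun i hi => Stmt17.measurable_X_past m hi) le_rfl η)
      have hpastED : ∀ m, MeasurableSet[⨆ i ∈ Set.Iio m,
          MeasurableSpace.comap (X i) inferInstance]
          (Stmt17.E X m \ Stmt17.H X m η) := fun m =>
        (Stmt17.measurableSet_E (mm := m)
            (fun i hi => Stmt17.measurable_X_past m hi) le_rfl).diff
          (Stmt17.measurableSet_H (mm := m)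
            (fun i hi => Stmt17.measurable_X_past m hi) le_rfl η)
      have hD1 : ∀ m, P ((Stmt17.E X m ∩ Stmt17.H X m η) ∩ Stmt17.A X m (t - η))
          = P (Stmt17.E X m ∩ Stmt17.H X m η) * P (Stmt17.A X 0 (t - η)) := by
        intro m
        rw [Stmt17.indep_past hmeas hindep m (hpastEH m) (t - η),
          Stmt17.meas_A_eq hmeas hindep hident m (t - η)]
      have hD2 : ∀ m, P ((Stmt17.E X m \ Stmt17.H X m η) ∩ Stmt17.A X m t)
          = P (Stmt17.E X m \ Stmt17.H X m η) * P (Stmt17.A X 0 t) := by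
        intro m
        rw [Stmt17.indep_past hmeas hindep m (hpastED m) t,
          Stmt17.meas_A_eq hmeas hindep hident m t]
      set F : ℕ → Set Ω := fun m =>
        ((Stmt17.E X m ∩ Stmt17.H X m η) ∩ Stmt17.A X m (t - η)) ∪
        ((Stmt17.E X m \ Stmt17.H X m η) ∩ Stmt17.A X m t) with hFdef
      have hFsub : ∀ m, F m ⊆ Stmt17.E X m := by
        intro m ω hω
        rcases hω with hω | hω
        · exact hω.1.1
        · exact hω.1.1
      have hFdisj : Pairwise (Function.onFun Disjoint F) :=
        fun m n hmn => (hEdisj hmn).mono (hFsub m) (hFsub n)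
      have hAmeasM : ∀ m u, MeasurableSet (Stmt17.A X m u) := fun m u =>
        Stmt17.measurableSet_A (fun j => hmeas _) u
      have hFmeas : ∀ m, MeasurableSet (F m) := fun m =>
        (((hEmeas m).inter (hHmeas m η)).inter (hAmeasM m (t - η))).union
          (((hEmeas m).diff (hHmeas m η)).inter (hAmeasM m t))
      have hFP : ∀ m, P (F m) = P (Stmt17.E X m ∩ Stmt17.H X m η) * P (Stmt17.A X 0 (t - η))
          + P (Stmt17.E X m \ Stmt17.H X m η) * P (Stmt17.A X 0 t) := by
        intro m
        rw [hFdef]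
        have hdisj2 : Disjoint ((Stmt17.E X m ∩ Stmt17.H X m η) ∩ Stmt17.A X m (t - η))
            ((Stmt17.E X m \ Stmt17.H X m η) ∩ Stmt17.A X m t) := by
          apply Set.disjoint_left.mpr
          rintro ω ⟨⟨_, hH⟩, _⟩ ⟨⟨_, hH'⟩, _⟩
          exact hH' hH
        rw [measure_union hdisj2 (((hEmeas m).diff (hHmeas m η)).inter (hAmeasM m t)),
          hD1 m, hD2 m]
      have hsubA : (⋃ m, F m) ⊆ Stmt17.A X 0 t := by
        intro ω hω
        obtain ⟨m, hm⟩ := Set.mem_iUnion.mp hω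
        have h1m : 1 ≤ m := Stmt17.E_one_le hd (hFsub m hm)
        have hwadd : ∀ k i, Stmt17.W X 0 (m + k) ω i
            = Stmt17.W X 0 m ω i + Stmt17.W X m k ω i := by
          intro k i
          rw [Stmt17.W_add X m k ω]
          rfl
        rcases hm with hm | hm
        · obtain ⟨⟨_, hHm⟩, k, hk, hAk⟩ := hm
          refine ⟨m + k, le_trans h1m (Nat.le_add_right m k), fun i => ?_⟩
          rw [hwadd k i]
          have h1 := hHm i
          have h2 := hAk i
          linarith
        · obtain ⟨⟨hEm, _⟩, k, hk, hAk⟩ := hm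
          refine ⟨m + k, le_trans h1m (Nat.le_add_right m k), fun i => ?_⟩
          rw [hwadd k i]
          have h1 := hEm.1 i
          have h2 := hAk i
          linarith
      have hineq : q * P (Stmt17.A X 0 (t - η)) + s * P (Stmt17.A X 0 t)
          ≤ P (Stmt17.A X 0 t) := by
        calc q * P (Stmt17.A X 0 (t - η)) + s * P (Stmt17.A X 0 t)
            = ∑' m, P (F m) := by
              rw [tsum_congr hFP, ENNReal.tsum_add, hqdef, hsdef,
                ENNReal.tsum_mul_right, ENNReal.tsum_mul_right]
        _ = P (⋃ m, F m) := (measure_iUnion hFdisj hFmeas).symm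
        _ ≤ P (Stmt17.A X 0 t) := measure_mono hsubA
      rw [hprev, mul_one] at hineq
      set a := P (Stmt17.A X 0 t) with hadef
      have ha1 : a ≤ 1 := prob_le_one
      have hafin : a ≠ ⊤ := (lt_of_le_of_lt ha1 ENNReal.one_lt_top).ne
      have hR : q.toReal + s.toReal * a.toReal ≤ a.toReal := by
        have hmono := ENNReal.toReal_mono hafin hineq
        rwa [ENNReal.toReal_add hqfin (ENNReal.mul_ne_top hsfin hafin),
          ENNReal.toReal_mul] at hmono
      have hQS : q.toReal + s.toReal = 1 := by
        rw [← ENNReal.toReal_add hqfin hsfin, hqs, ENNReal.toReal_one]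
      have hQpos : 0 < q.toReal := ENNReal.toReal_pos hqne hqfin
      have haR : a.toReal ≤ 1 := by
        calc a.toReal ≤ (1 : ℝ≥0∞).toReal := ENNReal.toReal_mono ENNReal.one_ne_top ha1
        _ = 1 := ENNReal.toReal_one
      have htr : a.toReal = 1 := by nlinarith
      exact (ENNReal.toReal_eq_one_iff a).mp htr
    -- base case and induction
    have base : ∀ t : ℝ, t ≤ 0 → P (Stmt17.A X 0 t) = 1 := by
      intro t ht
      refine le_antisymm prob_le_one ?_
      rw [← hhit]
      refine measure_mono ?_
      rintro ω ⟨k, hk, h⟩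
      exact ⟨k, hk, fun i => lt_of_le_of_lt ht (h i)⟩
    have ind : ∀ n : ℕ, ∀ t : ℝ, t ≤ n * η → P (Stmt17.A X 0 t) = 1 := by
      intro n
      induction n with
      | zero => intro t ht; exact base t (by simpa using ht)
      | succ n ih =>
        intro t ht
        refine step t (ih (t - η) ?_)
        push_cast at ht ⊢
        linarith
    intro t
    obtain ⟨n, hn⟩ := exists_nat_ge (t / η)
    exact ind n t ((div_le_iff₀ hηpos).mp hn)
  -- conclude for the given x
  set t := ∑ i, |x i| with htdef
  have hxt : ∀ i, x i ≤ t := fun i =>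
    (le_abs_self _).trans
      (Finset.single_le_sum (fun j _ => abs_nonneg (x j)) (Finset.mem_univ i))
  have hsub : Stmt17.A X 0 t ⊆ {ω | ∃ n, 1 ≤ n ∧ ∀ i, x i < S n ω i} := by
    rintro ω ⟨k, hk, h⟩
    refine ⟨k, hk, fun i => ?_⟩
    rw [hSW]
    exact lt_of_le_of_lt (hxt i) (h i)
  refine le_antisymm prob_le_one ?_
  calc (1 : ℝ≥0∞) = P (Stmt17.A X 0 t) := (key t).symm
  _ ≤ _ := measure_mono hsub
end
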